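/- arXiv:2208.03810 — 3 statements merged into one kernel-verified Lean document; each statement's English description precedes it below -/
import Mathlib

section
/- There is a constant K > 0 such that for every ε > 0 there exists N_ε with the following property: for every integer ℓ ≥ 1 with n := ℓ · 2^ℓ > N_ε, there exist a monotone read-once DNF f on n variables (consisting of 2^ℓ pairwise-disjoint terms of ℓ variables each) and a cost vector c ∈ ℝ^n with all entries positive such that under the uniform distribution OPT_N(f, c) ≥ K · (n^{1−ε} / log₂ n) · OPT_A(f, c). -/
open Finset

/-- The set of tested indices `T` determines `f` on input `x`:
every input agreeing with `x` on `T` gives the same function value. -/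
def Determines (n : ℕ) (f : (Fin n → Bool) → Bool) (T : Finset (Fin n))
    (x : Fin n → Bool) : Prop :=
  ∀ x' : Fin n → Bool, (∀ i ∈ T, x' i = x i) → f x' = f x

/-- The set of indices tested by the non-adaptive strategy `π` in its first `k` tests. -/
def prefixSet (n : ℕ) (π : Equiv.Perm (Fin n)) (k : ℕ) : Finset (Fin n) :=
  Finset.univ.filter (fun i => (π.symm i).val < k)

/-- The number of tests performed by the non-adaptive strategy `π` on input `x`:
the least `k` such that the first `k` tested indices determine `f` on `x`. -/
noncomputable def naSteps (n : ℕ) (f : (Fin n → Bool) → Bool)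
    (π : Equiv.Perm (Fin n)) (x : Fin n → Bool) : ℕ :=
  sInf {k : ℕ | Determines n f (prefixSet n π k) x}

/-- The cost incurred by the non-adaptive strategy `π` on input `x`, with cost vector `c`. -/
noncomputable def naCost (n : ℕ) (f : (Fin n → Bool) → Bool) (c : Fin n → ℝ)
    (π : Equiv.Perm (Fin n)) (x : Fin n → Bool) : ℝ :=
  ∑ i ∈ prefixSet n π (naSteps n f π x), c i

/-- Probability of the outcome `x` under the product distribution with parameters `p`. -/
def prodWeight (n : ℕ) (p : Fin n → ℝ) (x : Fin n → Bool) : ℝ :=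
  ∏ i : Fin n, if x i then p i else 1 - p i

/-- Expected cost of the non-adaptive strategy `π`. -/
noncomputable def naExpCost (n : ℕ) (f : (Fin n → Bool) → Bool) (c : Fin n → ℝ)
    (p : Fin n → ℝ) (π : Equiv.Perm (Fin n)) : ℝ :=
  ∑ x : Fin n → Bool, prodWeight n p x * naCost n f c π x

/-- Optimal expected cost among non-adaptive strategies. -/
noncomputable def OPTN (n : ℕ) (f : (Fin n → Bool) → Bool) (c : Fin n → ℝ)
    (p : Fin n → ℝ) : ℝ :=
  sInf { r : ℝ | ∃ π : Equiv.Perm (Fin n), r = naExpCost n f c p π }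

/-- Binary decision trees over `n` variables (adaptive strategies). -/
inductive DecTree (n : ℕ) : Type
  | leaf : Bool → DecTree n
  | node : Fin n → DecTree n → DecTree n → DecTree n

/-- Evaluation of a decision tree on an input. -/
def DecTree.eval {n : ℕ} : DecTree n → (Fin n → Bool) → Bool
  | .leaf b, _ => b
  | .node i t0 t1, x => if x i then DecTree.eval t1 x else DecTree.eval t0 x

/-- Cost of a decision tree on input `x`: the sum of the costs of the indices
labeling the internal nodes on the root-to-leaf path followed on `x`. -/
def DecTree.costOn {n : ℕ} (c : Fin n → ℝ) : DecTree n → (Fin n → Bool) → ℝ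
  | .leaf _, _ => 0
  | .node i t0 t1, x =>
      c i + (if x i then DecTree.costOn c t1 x else DecTree.costOn c t0 x)

/-- The decision tree `t` computes the function `f`. -/
def DecTree.Computes {n : ℕ} (t : DecTree n) (f : (Fin n → Bool) → Bool) : Prop :=
  ∀ x, t.eval x = f x

/-- Expected cost of an adaptive strategy (decision tree). -/
noncomputable def adExpCost (n : ℕ) (c : Fin n → ℝ) (p : Fin n → ℝ)
    (t : DecTree n) : ℝ :=
  ∑ x : Fin n → Bool, prodWeight n p x * DecTree.costOn c t x

/-- Optimal expected cost among adaptive strategies computing `f`. -/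
noncomputable def OPTA (n : ℕ) (f : (Fin n → Bool) → Bool) (c : Fin n → ℝ)
    (p : Fin n → ℝ) : ℝ :=
  sInf { r : ℝ | ∃ t : DecTree n, DecTree.Computes t f ∧ r = adExpCost n c p t }

/-- `f` is the monotone read-once DNF whose terms are the (nonempty, pairwise disjoint)
sets of variables `T 0, …, T (m-1)`. -/
def IsReadOnceDNF (n m : ℕ) (T : Fin m → Finset (Fin n))
    (f : (Fin n → Bool) → Bool) : Prop :=
  (∀ j, (T j).Nonempty) ∧
  (∀ j k, j ≠ k → Disjoint (T j) (T k)) ∧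
  (∀ x, f x = true ↔ ∃ j, ∀ i ∈ T j, x i = true)


namespace SBFE

def varsOf {n : ℕ} : DecTree n → Finset (Fin n)
  | .leaf _ => ∅
  | .node i t0 t1 => insert i (varsOf t0 ∪ varsOf t1)

lemma costOn_nonneg {n : ℕ} (c : Fin n → ℝ) (hc : ∀ i, 0 ≤ c i) (t : DecTree n)
    (x : Fin n → Bool) : 0 ≤ DecTree.costOn c t x := by
  induction t with
  | leaf b => simp [DecTree.costOn]
  | node i t0 t1 h0 h1 =>
    simp only [DecTree.costOn]
    have := hc i
    split <;> linarith

lemma costOn_update {n : ℕ} (c : Fin n → ℝ) (t : DecTree n) (i : Fin n)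
    (hi : i ∉ varsOf t) (x : Fin n → Bool) (b : Bool) :
    DecTree.costOn c t (Function.update x i b) = DecTree.costOn c t x := by
  induction t with
  | leaf b' => simp [DecTree.costOn]
  | node k t0 t1 h0 h1 =>
    simp only [varsOf, Finset.mem_insert, Finset.mem_union] at hi
    push_neg at hi
    obtain ⟨hki, h0', h1'⟩ := hi
    simp only [DecTree.costOn, Function.update_of_ne (Ne.symm hki),
      h0 h0', h1 h1']

lemma sum_ite_eq_half {n : ℕ} (F : (Fin n → Bool) → ℝ) (i : Fin n) (b : Bool)
    (hF : ∀ x b', F (Function.update x i b') = F x) :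
    ∑ x : Fin n → Bool, (if x i = b then F x else 0) = (∑ x : Fin n → Bool, F x) / 2 := by
  classical
  have hinv : Function.Involutive (fun x : Fin n → Bool => Function.update x i (!x i)) := by
    intro x
    funext k
    by_cases hk : k = i
    · subst hk; simp
    · simp [Function.update_of_ne hk]
  set σ : Equiv.Perm (Fin n → Bool) := hinv.toPerm _ with hσ
  have key : ∑ x : Fin n → Bool, (if x i = b then F x else 0)
      = ∑ x : Fin n → Bool, (if x i = !b then F x else 0) := by
    calc ∑ x : Fin n → Bool, (if x i = b then F x else 0)
        = ∑ x : Fin n → Bool, (if (σ x) i = b then F (σ x) else 0) :=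
          (Equiv.sum_comp σ (fun x => if x i = b then F x else 0)).symm
      _ = ∑ x : Fin n → Bool, (if x i = !b then F x else 0) := by
          apply Finset.sum_congr rfl
          intro x _
          have h1 : (σ x) i = !x i := by
            show Function.update x i (!x i) i = !x i
            simp
          have h2 : F (σ x) = F x := hF x (!x i)
          rw [h1, h2]
          cases hx : x i <;> cases b <;> simp
  have tot : ∑ x : Fin n → Bool, (if x i = b then F x else 0)
      + ∑ x : Fin n → Bool, (if x i = !b then F x else 0) = ∑ x : Fin n → Bool, F x := by
    rw [← Finset.sum_add_distrib]
    apply Finset.sum_congr rfl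
    intro x _
    cases hx : x i <;> cases b <;> simp [hx]
  rw [key] at tot ⊢
  linarith

lemma sum_costOn_node {n : ℕ} (c : Fin n → ℝ) (i : Fin n) (t0 t1 : DecTree n)
    (h0 : i ∉ varsOf t0) (h1 : i ∉ varsOf t1) :
    ∑ x : Fin n → Bool, DecTree.costOn c (.node i t0 t1) x
      = 2^n * c i + ((∑ x : Fin n → Bool, DecTree.costOn c t0 x)
          + (∑ x : Fin n → Bool, DecTree.costOn c t1 x)) / 2 := by
  classical
  have split : ∀ x : Fin n → Bool,
      DecTree.costOn c (.node i t0 t1) x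
        = c i + ((if x i = true then DecTree.costOn c t1 x else 0)
            + (if x i = false then DecTree.costOn c t0 x else 0)) := by
    intro x
    simp only [DecTree.costOn]
    cases hx : x i <;> simp [hx]
  simp only [split]
  rw [Finset.sum_add_distrib, Finset.sum_add_distrib, Finset.sum_const]
  rw [sum_ite_eq_half _ i true (fun x b' => costOn_update c t1 i h1 x b'),
      sum_ite_eq_half _ i false (fun x b' => costOn_update c t0 i h0 x b')]
  have hcard : (Finset.univ : Finset (Fin n → Bool)).card = 2^n := by
    simp [Fintype.card_fun]
  rw [hcard]
  ring


def B (l : ℕ) : Fin (2^l) × Fin l ≃ Fin (l * 2^l) :=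
  (Equiv.prodComm _ _).trans finProdFinEquiv

def myT (l : ℕ) (j : Fin (2^l)) : Finset (Fin (l*2^l)) :=
  Finset.univ.image (fun t => B l (j, t))

def myf (l : ℕ) (x : Fin (l*2^l) → Bool) : Bool :=
  decide (∃ j : Fin (2^l), ∀ t : Fin l, x (B l (j,t)) = true)

noncomputable def myc (l : ℕ) (i : Fin (l*2^l)) : ℝ := 2 ^ (((B l).symm i).2 : ℕ)

lemma myc_apply (l : ℕ) (j : Fin (2^l)) (t : Fin l) :
    myc l (B l (j,t)) = 2 ^ (t:ℕ) := by simp [myc]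

lemma myc_pos (l : ℕ) (i : Fin (l*2^l)) : 0 < myc l i := by unfold myc; positivity

def chainT (l : ℕ) (j : Fin (2^l)) (fb : DecTree (l*2^l)) : List (Fin l) → DecTree (l*2^l)
  | [] => .leaf true
  | t :: ts => .node (B l (j,t)) fb (chainT l j fb ts)

def bigT (l : ℕ) : List (Fin (2^l)) → DecTree (l*2^l)
  | [] => .leaf false
  | j :: js => chainT l j (bigT l js) (List.finRange l)

lemma eval_chainT (l : ℕ) (j : Fin (2^l)) (fb : DecTree (l*2^l)) (ts : List (Fin l))
    (x : Fin (l*2^l) → Bool) :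
    DecTree.eval (chainT l j fb ts) x
      = if ∀ t ∈ ts, x (B l (j,t)) = true then true else DecTree.eval fb x := by
  classical
  induction ts with
  | nil => simp [chainT, DecTree.eval]
  | cons t ts ih =>
    simp only [chainT, DecTree.eval, ih]
    by_cases h : x (B l (j,t)) = true
    · by_cases h2 : ∀ t' ∈ ts, x (B l (j,t')) = true
      · simp [h, h2]
      · have : ¬ ∀ t' ∈ t :: ts, x (B l (j,t')) = true := by
          simp only [List.mem_cons]
          push_neg
          push_neg at h2
          obtain ⟨t', ht', hv⟩ := h2
          exact ⟨t', Or.inr ht', hv⟩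
        simp [h, h2, this]
    · have : ¬ ∀ t' ∈ t :: ts, x (B l (j,t')) = true := by
        intro hall; exact h (hall t (List.mem_cons_self))
      simp [h, this]

lemma eval_bigT (l : ℕ) (L : List (Fin (2^l))) (x : Fin (l*2^l) → Bool) :
    DecTree.eval (bigT l L) x
      = if ∃ j ∈ L, ∀ t : Fin l, x (B l (j,t)) = true then true else false := by
  classical
  induction L with
  | nil => simp [bigT, DecTree.eval]
  | cons j js ih =>
    simp only [bigT, eval_chainT, ih]
    by_cases h : ∀ t : Fin l, x (B l (j,t)) = true
    · have h' : ∀ t ∈ List.finRange l, x (B l (j,t)) = true := fun t _ => h t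
      have : ∃ j' ∈ j :: js, ∀ t : Fin l, x (B l (j',t)) = true :=
        ⟨j, List.mem_cons_self, h⟩
      simp [h', this]
    · have h' : ¬ ∀ t ∈ List.finRange l, x (B l (j,t)) = true := by
        intro hall; exact h (fun t => hall t (List.mem_finRange t))
      by_cases h2 : ∃ j' ∈ js, ∀ t : Fin l, x (B l (j',t)) = true
      · have : ∃ j' ∈ j :: js, ∀ t : Fin l, x (B l (j',t)) = true := by
          obtain ⟨j', hj', hv⟩ := h2
          exact ⟨j', List.mem_cons_of_mem j hj', hv⟩
        simp [h', h2, this]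
      · have : ¬ ∃ j' ∈ j :: js, ∀ t : Fin l, x (B l (j',t)) = true := by
          push_neg
          push_neg at h2 h
          intro j' hj'
          rcases List.mem_cons.mp hj' with rfl | hmem
          · obtain ⟨t, ht⟩ := h
            exact ⟨t, by simp [ht]⟩
          · obtain ⟨t, ht⟩ := h2 j' hmem
            exact ⟨t, ht⟩
        simp [h', h2, this]

noncomputable def myTree (l : ℕ) : DecTree (l*2^l) := bigT l (List.finRange (2^l))

lemma myTree_computes (l : ℕ) : DecTree.Computes (myTree l) (myf l) := by
  intro x
  rw [myTree, eval_bigT, myf]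
  by_cases h : ∃ j : Fin (2^l), ∀ t : Fin l, x (B l (j,t)) = true
  · have h' : ∃ j ∈ List.finRange (2^l), ∀ t : Fin l, x (B l (j,t)) = true := by
      obtain ⟨j, hj⟩ := h; exact ⟨j, List.mem_finRange j, hj⟩
    simp [h, h']
  · have h' : ¬ ∃ j ∈ List.finRange (2^l), ∀ t : Fin l, x (B l (j,t)) = true := by
      intro ⟨j, _, hj⟩; exact h ⟨j, hj⟩
    simp [h, h']

lemma vars_chainT (l : ℕ) (j : Fin (2^l)) (fb : DecTree (l*2^l)) (ts : List (Fin l)) :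
    varsOf (chainT l j fb ts) ⊆ ts.toFinset.image (fun t => B l (j,t)) ∪ varsOf fb := by
  classical
  induction ts with
  | nil => simp [chainT, varsOf]
  | cons t ts ih =>
    simp only [chainT, varsOf]
    intro i hi
    rcases Finset.mem_insert.mp hi with rfl | hi
    · exact Finset.mem_union_left _ (Finset.mem_image.mpr ⟨t, by simp, rfl⟩)
    · rcases Finset.mem_union.mp hi with hfb | hch
      · exact Finset.mem_union_right _ hfb
      · rcases Finset.mem_union.mp (ih hch) with him | hfb
        · obtain ⟨t', ht', rfl⟩ := Finset.mem_image.mp him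
          exact Finset.mem_union_left _ (Finset.mem_image.mpr ⟨t', by simp_all, rfl⟩)
        · exact Finset.mem_union_right _ hfb

lemma vars_bigT (l : ℕ) (L : List (Fin (2^l))) :
    varsOf (bigT l L) ⊆ L.toFinset.biUnion (myT l) := by
  classical
  induction L with
  | nil => simp [bigT, varsOf]
  | cons j js ih =>
    simp only [bigT]
    intro i hi
    rcases Finset.mem_union.mp (vars_chainT l j (bigT l js) (List.finRange l) hi)
      with him | hfb
    · obtain ⟨t, _, rfl⟩ := Finset.mem_image.mp him
      exact Finset.mem_biUnion.mpr ⟨j, by simp, Finset.mem_image.mpr ⟨t, by simp, rfl⟩⟩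
    · obtain ⟨j', hj', hm⟩ := Finset.mem_biUnion.mp (ih hfb)
      exact Finset.mem_biUnion.mpr ⟨j', by simp [List.mem_toFinset.mp hj'], hm⟩

noncomputable def Sval (l : ℕ) : List (Fin l) → ℝ
  | [] => 0
  | t :: ts => 2 ^ (t:ℕ) + Sval l ts / 2

lemma Sval_map_succ (l : ℕ) (ts : List (Fin l)) :
    Sval (l+1) (ts.map Fin.succ) = 2 * Sval l ts := by
  induction ts with
  | nil => simp [Sval]
  | cons t ts ih =>
    simp only [List.map_cons, Sval, ih, Fin.val_succ]
    ring

lemma Sval_finRange (l : ℕ) : Sval l (List.finRange l) = l := by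
  induction l with
  | zero => simp [List.finRange, Sval]
  | succ l ih =>
    rw [List.finRange_succ]
    simp only [Sval, Sval_map_succ, ih]
    push_cast
    ring_nf
    simp [add_comm]

lemma esum_chainT (l : ℕ) (j : Fin (2^l)) (fb : DecTree (l*2^l)) (ts : List (Fin l))
    (hnd : ts.Nodup) (hfb : ∀ t : Fin l, B l (j,t) ∉ varsOf fb) :
    ∑ x : Fin (l*2^l) → Bool, DecTree.costOn (myc l) (chainT l j fb ts) x
      ≤ 2^(l*2^l) * Sval l ts
        + ∑ x : Fin (l*2^l) → Bool, DecTree.costOn (myc l) fb x := by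
  classical
  induction ts with
  | nil =>
    simp only [chainT, Sval, mul_zero, zero_add]
    have : ∀ x : Fin (l*2^l) → Bool, DecTree.costOn (myc l) (.leaf true) x = 0 :=
      fun _ => rfl
    simp only [this, Finset.sum_const, smul_zero]
    exact Finset.sum_nonneg fun x _ => costOn_nonneg _ (fun i => (myc_pos l i).le) _ _
  | cons t ts ih =>
    have hnd' : ts.Nodup := (List.nodup_cons.mp hnd).2
    have htts : t ∉ ts := (List.nodup_cons.mp hnd).1
    have hfresh1 : B l (j,t) ∉ varsOf (chainT l j fb ts) := by
      intro hmem
      rcases Finset.mem_union.mp (vars_chainT l j fb ts hmem) with him | hf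
      · obtain ⟨t', ht', he⟩ := Finset.mem_image.mp him
        have : t' = t := by
          have := (B l).injective he
          exact (Prod.mk.injEq _ _ _ _ ▸ this).2
        exact htts (this ▸ List.mem_toFinset.mp ht')
      · exact hfb t hf
    have step := sum_costOn_node (myc l) (B l (j,t)) fb (chainT l j fb ts)
      (hfb t) hfresh1
    simp only [chainT]
    rw [step, myc_apply]
    have ihh := ih hnd'
    simp only [Sval]
    nlinarith [ihh]

lemma esum_bigT (l : ℕ) (L : List (Fin (2^l))) (hnd : L.Nodup) :
    ∑ x : Fin (l*2^l) → Bool, DecTree.costOn (myc l) (bigT l L) x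
      ≤ 2^(l*2^l) * l * L.length := by
  classical
  induction L with
  | nil =>
    have : ∀ x : Fin (l*2^l) → Bool, DecTree.costOn (myc l) (.leaf false) x = 0 :=
      fun _ => rfl
    simp [bigT, this]
  | cons j js ih =>
    have hnd' : js.Nodup := (List.nodup_cons.mp hnd).2
    have hjjs : j ∉ js := (List.nodup_cons.mp hnd).1
    have hfb : ∀ t : Fin l, B l (j,t) ∉ varsOf (bigT l js) := by
      intro t hmem
      obtain ⟨j', hj', hm⟩ := Finset.mem_biUnion.mp (vars_bigT l js hmem)
      obtain ⟨t', _, he⟩ := Finset.mem_image.mp hm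
      have : j' = j := by
        have := (B l).injective he
        exact (Prod.mk.injEq _ _ _ _ ▸ this).1
      exact hjjs (this ▸ List.mem_toFinset.mp hj')
    have step := esum_chainT l j (bigT l js) (List.finRange l)
      (List.nodup_finRange l) hfb
    simp only [bigT]
    calc ∑ x : Fin (l*2^l) → Bool, DecTree.costOn (myc l) (chainT l j (bigT l js) (List.finRange l)) x
        ≤ 2^(l*2^l) * Sval l (List.finRange l)
          + ∑ x : Fin (l*2^l) → Bool, DecTree.costOn (myc l) (bigT l js) x := step
      _ ≤ 2^(l*2^l) * l + 2^(l*2^l) * l * js.length := by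
          rw [Sval_finRange]
          linarith [ih hnd']
      _ = 2^(l*2^l) * l * (js.length + 1) := by ring
      _ = 2^(l*2^l) * l * (List.length (j :: js)) := by simp

lemma prodWeight_uniform (n : ℕ) (x : Fin n → Bool) :
    prodWeight n (fun _ => 1/2) x = (1/2)^n := by
  unfold prodWeight
  rw [show ∀ (a : Fin n → ℝ), (∏ i : Fin n, a i) = ∏ i : Fin n, a i from fun _ => rfl]
  calc (∏ i : Fin n, if x i then (1:ℝ)/2 else 1 - 1/2)
      = ∏ _i : Fin n, (1:ℝ)/2 := by
        apply Finset.prod_congr rfl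
        intro i _
        split <;> norm_num
    _ = (1/2)^n := by rw [Finset.prod_const, Finset.card_univ, Fintype.card_fin]

lemma adExpCost_nonneg (n : ℕ) (c : Fin n → ℝ) (hc : ∀ i, 0 ≤ c i) (t : DecTree n) :
    0 ≤ adExpCost n c (fun _ => 1/2) t := by
  apply Finset.sum_nonneg
  intro x _
  have h1 : 0 ≤ prodWeight n (fun _ => 1/2) x := by
    rw [prodWeight_uniform]; positivity
  exact mul_nonneg h1 (costOn_nonneg c hc t x)

lemma adExpCost_myTree (l : ℕ) :
    adExpCost (l*2^l) (myc l) (fun _ => 1/2) (myTree l) ≤ l * 2^l := by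
  unfold adExpCost
  have h1 : ∀ x : Fin (l*2^l) → Bool,
      prodWeight (l*2^l) (fun _ => 1/2) x * DecTree.costOn (myc l) (myTree l) x
        = (1/2)^(l*2^l) * DecTree.costOn (myc l) (myTree l) x := by
    intro x; rw [prodWeight_uniform]
  simp only [h1]
  rw [← Finset.mul_sum]
  have h2 := esum_bigT l (List.finRange (2^l)) (List.nodup_finRange _)
  rw [List.length_finRange] at h2
  calc ((1:ℝ)/2)^(l*2^l) * ∑ x : Fin (l*2^l) → Bool, DecTree.costOn (myc l) (myTree l) x
      ≤ (1/2)^(l*2^l) * (2^(l*2^l) * l * 2^l) := by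
        apply mul_le_mul_of_nonneg_left _ (by positivity)
        exact_mod_cast h2
    _ = ((1/2)^(l*2^l) * 2^(l*2^l)) * (l * 2^l) := by ring
    _ = l * 2^l := by
        rw [one_div, inv_pow, inv_mul_cancel₀ (by positivity)]
        ring

lemma OPTA_le (l : ℕ) :
    OPTA (l*2^l) (myf l) (myc l) (fun _ => 1/2) ≤ l * 2^l := by
  have hmem : adExpCost (l*2^l) (myc l) (fun _ => 1/2) (myTree l)
      ∈ { r : ℝ | ∃ t : DecTree (l*2^l), DecTree.Computes t (myf l)
          ∧ r = adExpCost (l*2^l) (myc l) (fun _ => 1/2) t } :=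
    ⟨myTree l, myTree_computes l, rfl⟩
  have hbdd : BddBelow { r : ℝ | ∃ t : DecTree (l*2^l), DecTree.Computes t (myf l)
      ∧ r = adExpCost (l*2^l) (myc l) (fun _ => 1/2) t } := by
    refine ⟨0, ?_⟩
    rintro r ⟨t, _, rfl⟩
    exact adExpCost_nonneg _ _ (fun i => (myc_pos l i).le) t
  exact le_trans (csInf_le hbdd hmem) (adExpCost_myTree l)

lemma myT_card (l : ℕ) (j : Fin (2^l)) : (myT l j).card = l := by
  unfold myT
  rw [Finset.card_image_of_injective _ (fun t t' h => by
    have := (B l).injective h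
    exact (Prod.mk.injEq _ _ _ _ ▸ this).2)]
  simp

lemma my_dnf (l : ℕ) (hl : 1 ≤ l) : IsReadOnceDNF (l*2^l) (2^l) (myT l) (myf l) := by
  refine ⟨?_, ?_, ?_⟩
  · intro j
    exact ⟨B l (j, ⟨0, hl⟩), Finset.mem_image.mpr ⟨⟨0, hl⟩, Finset.mem_univ _, rfl⟩⟩
  · intro j k hjk
    rw [Finset.disjoint_left]
    rintro i hij hik
    obtain ⟨t, _, rfl⟩ := Finset.mem_image.mp hij
    obtain ⟨t', _, he⟩ := Finset.mem_image.mp hik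
    exact hjk (congrArg Prod.fst ((B l).injective he)).symm
  · intro x
    unfold myf
    rw [decide_eq_true_iff]
    constructor
    · rintro ⟨j, hj⟩
      refine ⟨j, ?_⟩
      intro i hi
      obtain ⟨t, _, rfl⟩ := Finset.mem_image.mp hi
      exact hj t
    · rintro ⟨j, hj⟩
      exact ⟨j, fun t => hj _ (Finset.mem_image.mpr ⟨t, Finset.mem_univ _, rfl⟩)⟩

def blockEquiv (l : ℕ) : (Fin (l*2^l) → Bool) ≃ (Fin (2^l) → Fin l → Bool) where
  toFun x j t := x (B l (j,t))
  invFun y i := y ((B l).symm i).1 ((B l).symm i).2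
  left_inv x := by
    funext i
    simp
  right_inv y := by
    funext j t
    simp

lemma card_blockwise (l : ℕ) (p : Fin (2^l) → (Fin l → Bool) → Prop)
    [∀ j y, Decidable (p j y)] :
    (Finset.univ.filter
        (fun x : Fin (l*2^l) → Bool => ∀ j, p j (fun t => x (B l (j,t))))).card
      = ∏ j, (Finset.univ.filter (fun y : Fin l → Bool => p j y)).card := by
  classical
  have h1 : (Finset.univ.filter
      (fun x : Fin (l*2^l) → Bool => ∀ j, p j (fun t => x (B l (j,t))))).card
      = Fintype.card {x : Fin (l*2^l) → Bool // ∀ j, p j (fun t => x (B l (j,t)))} := by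
    rw [Fintype.card_subtype]
  have e1 : {x : Fin (l*2^l) → Bool // ∀ j, p j (fun t => x (B l (j,t)))}
      ≃ {y : Fin (2^l) → Fin l → Bool // ∀ j, p j (y j)} := by
    apply Equiv.subtypeEquiv (blockEquiv l)
    intro x
    rfl
  have e2 : {y : Fin (2^l) → Fin l → Bool // ∀ j, p j (y j)}
      ≃ ∀ j : Fin (2^l), {y : Fin l → Bool // p j y} := Equiv.subtypePiEquivPi
  rw [h1, Fintype.card_congr (e1.trans e2), Fintype.card_pi]
  apply Finset.prod_congr rfl
  intro j _
  rw [Fintype.card_subtype]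

lemma card_ne_allT (l : ℕ) :
    (Finset.univ.filter (fun y : Fin l → Bool => y ≠ (fun _ => true))).card
      = 2^l - 1 := by
  classical
  have h := Finset.card_filter_add_card_filter_not
    (s := (Finset.univ : Finset (Fin l → Bool)))
    (p := fun y => y = (fun _ => true))
  have h1 : (Finset.univ.filter (fun y : Fin l → Bool => y = (fun _ => true))).card = 1 := by
    rw [Finset.filter_eq']
    simp
  have h2 : (Finset.univ : Finset (Fin l → Bool)).card = 2^l := by
    rw [Finset.card_univ, Fintype.card_fun]
    simp
  simp only [ne_eq]
  omega

lemma card_ne_two (l : ℕ) (b : Fin l → Bool) (hb : b ≠ (fun _ => true)) :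
    (Finset.univ.filter
        (fun y : Fin l → Bool => y ≠ (fun _ => true) ∧ y ≠ b)).card = 2^l - 2 := by
  classical
  have hcong : Finset.univ.filter (fun y : Fin l → Bool => y ≠ (fun _ => true) ∧ y ≠ b)
      = Finset.univ.filter
          (fun y : Fin l → Bool => ¬ (y = (fun _ => true) ∨ y = b)) := by
    apply Finset.filter_congr
    intro y _
    constructor
    · rintro ⟨h1, h2⟩ (h | h) <;> [exact h1 h; exact h2 h]
    · intro h
      exact ⟨fun he => h (Or.inl he), fun he => h (Or.inr he)⟩
  have h := Finset.card_filter_add_card_filter_not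
    (s := (Finset.univ : Finset (Fin l → Bool)))
    (p := fun y => y = (fun _ => true) ∨ y = b)
  have h1 : (Finset.univ.filter
      (fun y : Fin l → Bool => y = (fun _ => true) ∨ y = b)).card = 2 := by
    have : Finset.univ.filter (fun y : Fin l → Bool => y = (fun _ => true) ∨ y = b)
        = {(fun _ => true), b} := by
      ext y
      simp [Finset.mem_insert, or_comm]
    rw [this, Finset.card_insert_of_notMem (by simpa using hb.symm), Finset.card_singleton]
  have h2 : (Finset.univ : Finset (Fin l → Bool)).card = 2^l := by
    rw [Finset.card_univ, Fintype.card_fun]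
    simp
  rw [hcong]
  simp only [not_or] at h ⊢
  omega



lemma count_arith (l : ℕ) (hl : 2 ≤ l) :
    (2:ℝ)^(l*2^l) / 32
      ≤ ((2^l:ℝ) - 1)^(2^l) - ((2^l:ℝ) - 2)^(2^(l-1)) * ((2^l:ℝ) - 1)^(2^l - 2^(l-1)) := by
  set q : ℕ := 2^(l-2) with hq
  have hq1 : 1 ≤ q := Nat.one_le_two_pow
  have hm : 2^l = 4*q := by
    rw [hq, show (4:ℕ) = 2^2 by norm_num, ← pow_add]
    congr 1
    omega
  have hs : 2^(l-1) = 2*q := by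
    rw [hq, ← pow_succ']
    congr 1
    omega
  have hms : 2^l - 2^(l-1) = 2*q := by omega
  have hQ1 : (1:ℝ) ≤ (q:ℝ) := by exact_mod_cast hq1
  have hmR : ((2^l:ℕ):ℝ) = 4*(q:ℝ) := by exact_mod_cast hm
  have hcast : (2^l:ℝ) = 4*(q:ℝ) := by push_cast at hmR; exact_mod_cast hmR
  set Q : ℝ := (q:ℝ) with hQdef
  set a : ℝ := (2^l:ℝ) - 1 with ha
  set b : ℝ := (2^l:ℝ) - 2 with hb
  have hb2 : (2:ℝ) ≤ b := by rw [hb, hcast]; linarith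
  have hb0 : (0:ℝ) < b := by linarith
  have ha0 : (0:ℝ) < a := by rw [ha, hcast]; linarith
  have hba : b ≤ a := by rw [ha, hb]; linarith
  rw [hms, hm, hs]
  -- LHS rewrite
  have hlhs : (2:ℝ)^(l*(4*q)) = ((4:ℝ)*Q)^(4*q) := by
    rw [pow_mul, hcast]
  rw [hlhs]
  -- step 1 : Bernoulli for a vs b
  have bern1 : (1:ℝ) + (2*q:ℕ) * (1/b) ≤ (1 + 1/b)^(2*q) := by
    have h0 : (0:ℝ) ≤ 1/b := by positivity
    have := one_add_mul_le_pow (a := 1/b) (by linarith : (-2:ℝ) ≤ 1/b) (2*q)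
    exact_mod_cast this
  have hab : a = b * (1 + 1/b) := by
    field_simp
    rw [ha, hb]
    ring
  have step1 : b^(2*q) * (1 + 2*Q/b) ≤ a^(2*q) := by
    rw [hab, mul_pow]
    apply mul_le_mul_of_nonneg_left _ (by positivity)
    calc (1:ℝ) + 2*Q/b = 1 + ((2*q:ℕ):ℝ) * (1/b) := by push_cast; ring
      _ ≤ (1 + 1/b)^(2*q) := by exact_mod_cast bern1
  have step2 : a^(4*q) - b^(2*q) * a^(2*q)
      ≥ 2*Q * b^(2*q) * b^(2*q) / b := by
    have h1 : a^(4*q) = a^(2*q) * a^(2*q) := by rw [← pow_add]; congr 1; ring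
    have h2 : a^(2*q) - b^(2*q) ≥ 2*Q*b^(2*q)/b := by
      have := step1
      have hexp : b^(2*q) * (1 + 2*Q/b) = b^(2*q) + 2*Q*b^(2*q)/b := by ring
      linarith [hexp ▸ this]
    have h3 : a^(2*q) * (a^(2*q) - b^(2*q)) ≥ b^(2*q) * (2*Q*b^(2*q)/b) := by
      apply mul_le_mul (by exact pow_le_pow_left₀ hb0.le hba _) h2 ?_ (by positivity)
      positivity
    calc a^(4*q) - b^(2*q) * a^(2*q) = a^(2*q) * (a^(2*q) - b^(2*q)) := by rw [h1]; ring
      _ ≥ b^(2*q) * (2*Q*b^(2*q)/b) := h3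
      _ = 2*Q * b^(2*q) * b^(2*q) / b := by ring
  -- step 3 : b^(4q)/b ≥ (4Q)^(4q)/(4Q)/16
  have hbm : b / (4*Q) = 1 - 2/(4*Q) := by
    rw [hb, hcast]
    field_simp
  have bern2 : (1:ℝ)/2 ≤ (1 - 2/(4*Q))^q := by
    have := one_add_mul_le_pow (a := -(2/(4*Q))) (by
      have : 0 < 2/(4*Q) := by positivity
      linarith [div_le_one_of_le₀ (by linarith : (2:ℝ) ≤ 4*Q) (by positivity : (0:ℝ) ≤ 4*Q)]) q
    have heq : (1:ℝ) + (q:ℝ) * (-(2/(4*Q))) = 1/2 := by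
      rw [hQdef]
      field_simp
      ring
    calc (1:ℝ)/2 = 1 + (q:ℝ) * (-(2/(4*Q))) := heq.symm
      _ ≤ (1 + -(2/(4*Q)))^q := this
      _ = (1 - 2/(4*Q))^q := by ring_nf
  have hbm01 : (0:ℝ) < 1 - 2/(4*Q) := by
    rw [← hbm]; positivity
  have pow4 : (1:ℝ)/16 ≤ (1 - 2/(4*Q))^(4*q) := by
    calc (1:ℝ)/16 = (1/2)^4 := by norm_num
      _ ≤ ((1 - 2/(4*Q))^q)^4 := by
          apply pow_le_pow_left₀ (by norm_num) bern2
      _ = (1 - 2/(4*Q))^(4*q) := by rw [← pow_mul]; congr 1; ring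
  have hratio : (4*Q)^(4*q)/16 ≤ b^(4*q) := by
    have h1 : b^(4*q) = (4*Q)^(4*q) * (1 - 2/(4*Q))^(4*q) := by
      rw [← mul_pow]
      congr 1
      rw [← hbm]
      field_simp
    rw [h1]
    calc (4*Q)^(4*q)/16 = (4*Q)^(4*q) * (1/16) := by ring
      _ ≤ (4*Q)^(4*q) * (1 - 2/(4*Q))^(4*q) :=
          mul_le_mul_of_nonneg_left pow4 (by positivity)
  -- combine
  have hbb : b^(2*q) * b^(2*q) = b^(4*q) := by rw [← pow_add]; congr 1; ring
  have final : (4*Q)^(4*q)/32 ≤ 2*Q * b^(2*q) * b^(2*q) / b := by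
    rw [show 2*Q * b^(2*q) * b^(2*q) / b = 2*Q * (b^(2*q)*b^(2*q)) / b by ring, hbb]
    rw [div_le_div_iff₀ (by norm_num) hb0]
    calc (4*Q)^(4*q) * b ≤ (4*Q)^(4*q) * (4*Q) := by
          apply mul_le_mul_of_nonneg_left _ (by positivity)
          rw [hb, hcast]; linarith
      _ = (4*Q)*(4*Q)^(4*q) := by ring
      _ ≤ (4*Q)*(16*b^(4*q)) := by
          apply mul_le_mul_of_nonneg_left _ (by positivity)
          linarith [hratio]
      _ = 2*Q*b^(4*q)*32 := by ring
  linarith [step2, final]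

lemma exists_top_subset {α : Type*} [DecidableEq α] :
    ∀ (k : ℕ) (s : Finset α) (g : α → ℕ), k ≤ s.card →
      ∃ S : Finset α, S ⊆ s ∧ S.card = k ∧ ∀ j ∈ S, ∀ j' ∈ s \ S, g j' ≤ g j := by
  intro k
  induction k with
  | zero => exact fun s g _ => ⟨∅, Finset.empty_subset s, rfl, by simp⟩
  | succ k ih =>
    intro s g hk
    have hne : s.Nonempty := Finset.card_pos.mp (by omega)
    obtain ⟨j₀, hj₀s, hj₀max⟩ := Finset.exists_max_image s g hne
    have hcard : k ≤ (s.erase j₀).card := by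
      rw [Finset.card_erase_of_mem hj₀s]; omega
    obtain ⟨S', hS'sub, hS'card, hS'top⟩ := ih (s.erase j₀) g hcard
    have hj₀nS' : j₀ ∉ S' := fun h => (Finset.notMem_erase j₀ s) (hS'sub h)
    refine ⟨insert j₀ S', ?_, ?_, ?_⟩
    · intro i hi
      rcases Finset.mem_insert.mp hi with rfl | hi
      · exact hj₀s
      · exact Finset.erase_subset _ _ (hS'sub hi)
    · rw [Finset.card_insert_of_notMem hj₀nS', hS'card]
    · intro j hj j' hj'
      have hj's : j' ∈ s := (Finset.mem_sdiff.mp hj').1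
      have hj'ni : j' ∉ insert j₀ S' := (Finset.mem_sdiff.mp hj').2
      rcases Finset.mem_insert.mp hj with rfl | hjS'
      · exact hj₀max j' hj's
      · refine hS'top j hjS' j' (Finset.mem_sdiff.mpr ⟨?_, ?_⟩)
        · exact Finset.mem_erase.mpr
            ⟨fun h => hj'ni (h ▸ Finset.mem_insert_self _ _), hj's⟩
        · exact fun h => hj'ni (Finset.mem_insert_of_mem h)

lemma naExpCost_ge (l : ℕ) (hl : 2 ≤ l) (π : Equiv.Perm (Fin (l*2^l))) :
    (2:ℝ)^(l-1) * 2^(l-1) / 32 ≤ naExpCost (l*2^l) (myf l) (myc l) (fun _ => 1/2) π := by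
  classical
  have hl1 : 1 ≤ l := by omega
  -- maximal positions within each term
  have hex : ∀ j : Fin (2^l), ∃ t₀ : Fin l,
      ∀ t, (π.symm (B l (j,t))).val ≤ (π.symm (B l (j,t₀))).val := by
    intro j
    obtain ⟨t₀, _, h⟩ := Finset.exists_max_image Finset.univ
      (fun t => (π.symm (B l (j,t))).val) ⟨⟨0, by omega⟩, Finset.mem_univ _⟩
    exact ⟨t₀, fun t => h t (Finset.mem_univ t)⟩
  choose tmax htmax using hex
  obtain ⟨S, hSsub, hScard, hStop⟩ := exists_top_subset (2^(l-1)) Finset.univ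
    (fun j => (π.symm (B l (j, tmax j))).val)
    (by
      rw [Finset.card_univ, Fintype.card_fin]
      exact Nat.pow_le_pow_right (by norm_num) (by omega))
  set pat : Fin (2^l) → Fin l → Bool :=
    fun j t => if t = tmax j then false else true with hpatdef
  have hpatne : ∀ j, pat j ≠ (fun _ => true) := by
    intro j h
    have := congrFun h (tmax j)
    simp [hpatdef] at this
  set P1 : (Fin (l*2^l) → Bool) → Prop :=
    fun x => ∀ j, (fun t => x (B l (j,t))) ≠ (fun _ => true) with hP1def
  set Qp : (Fin (l*2^l) → Bool) → Prop :=
    fun x => ∃ j ∈ S, (fun t => x (B l (j,t))) = pat j with hQpdef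
  -- COST CLAIM
  have key : ∀ x : Fin (l*2^l) → Bool, P1 x → Qp x →
      (2:ℝ)^(l-1) * 2^(l-1) ≤ naCost (l*2^l) (myf l) (myc l) π x := by
    intro x hZ hQ
    obtain ⟨jstar, hjstarS, hpat⟩ := hQ
    have hxv : ∀ t, x (B l (jstar,t)) = pat jstar t := fun t => congrFun hpat t
    have hfx : myf l x = false := by
      apply decide_eq_false
      rintro ⟨j, hj⟩
      exact hZ j (funext hj)
    have hne : {k : ℕ | Determines (l*2^l) (myf l) (prefixSet (l*2^l) π k) x}.Nonempty := by
      refine ⟨l*2^l, fun x' hx' => ?_⟩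
      have : x' = x := funext fun i =>
        hx' i (Finset.mem_filter.mpr ⟨Finset.mem_univ _, (π.symm i).isLt⟩)
      rw [this]
    have hdet : Determines (l*2^l) (myf l)
        (prefixSet (l*2^l) π (naSteps (l*2^l) (myf l) π x)) x := Nat.sInf_mem hne
    have hstep : (π.symm (B l (jstar, tmax jstar))).val < naSteps (l*2^l) (myf l) π x := by
      by_contra hcon
      push_neg at hcon
      have hagree : ∀ i ∈ prefixSet (l*2^l) π (naSteps (l*2^l) (myf l) π x),
          Function.update x (B l (jstar, tmax jstar)) true i = x i := by
        intro i hi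
        have hlt : (π.symm i).val < naSteps (l*2^l) (myf l) π x :=
          (Finset.mem_filter.mp hi).2
        apply Function.update_of_ne
        intro he
        rw [he] at hlt
        omega
      have heq := hdet (Function.update x (B l (jstar, tmax jstar)) true) hagree
      have hx' : myf l (Function.update x (B l (jstar, tmax jstar)) true) = true := by
        rw [myf, decide_eq_true_eq]
        refine ⟨jstar, fun t => ?_⟩
        by_cases ht : t = tmax jstar
        · subst ht; exact Function.update_self _ _ _
        · rw [Function.update_of_ne (fun he => ht (by
            have := (B l).injective he
            exact (Prod.mk.injEq _ _ _ _ ▸ this).2))]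
          rw [hxv t]
          simp [hpatdef, ht]
      rw [hx', hfx] at heq
      exact Bool.noConfusion heq
    -- the prefix contains every term outside S
    have hsubset : (Finset.univ \ S).biUnion (myT l)
        ⊆ prefixSet (l*2^l) π (naSteps (l*2^l) (myf l) π x) := by
      intro i hi
      obtain ⟨j', hj', hmem⟩ := Finset.mem_biUnion.mp hi
      obtain ⟨t, _, rfl⟩ := Finset.mem_image.mp hmem
      refine Finset.mem_filter.mpr ⟨Finset.mem_univ _, ?_⟩
      have h1 := htmax j' t
      have h2 := hStop jstar hjstarS j' hj'
      omega
    have hdisj : (↑(Finset.univ \ S) : Set (Fin (2^l))).PairwiseDisjoint (myT l) :=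
      fun j' _ k' _ hne' => (my_dnf l hl1).2.1 j' k' hne'
    have hterm : ∀ j' ∈ Finset.univ \ S,
        (2:ℝ)^(l-1) ≤ ∑ i ∈ myT l j', myc l i := by
      intro j' _
      have hmem : B l (j', ⟨l-1, by omega⟩) ∈ myT l j' :=
        Finset.mem_image.mpr ⟨⟨l-1, by omega⟩, Finset.mem_univ _, rfl⟩
      have h := Finset.single_le_sum (fun i _ => (myc_pos l i).le) hmem
      rw [myc_apply] at h
      exact h
    have hcardsd : (Finset.univ \ S).card = 2^(l-1) := by
      rw [Finset.card_sdiff_of_subset hSsub, Finset.card_univ, Fintype.card_fin, hScard]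
      have : 2^l = 2*2^(l-1) := by
        rw [← pow_succ']
        congr 1
        omega
      omega
    calc (2:ℝ)^(l-1) * 2^(l-1)
        = ((Finset.univ \ S).card : ℝ) * (2:ℝ)^(l-1) := by
          rw [hcardsd]
          push_cast
          ring
      _ ≤ ∑ j' ∈ Finset.univ \ S, ∑ i ∈ myT l j', myc l i := by
          have := Finset.card_nsmul_le_sum (Finset.univ \ S)
            (fun j' => ∑ i ∈ myT l j', myc l i) ((2:ℝ)^(l-1)) hterm
          rw [nsmul_eq_mul] at this
          exact this
      _ = ∑ i ∈ (Finset.univ \ S).biUnion (myT l), myc l i :=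
          (Finset.sum_biUnion hdisj).symm
      _ ≤ naCost (l*2^l) (myf l) (myc l) π x :=
          Finset.sum_le_sum_of_subset_of_nonneg hsubset
            (fun i _ _ => (myc_pos l i).le)
  -- COUNTING CLAIM
  have hsplit : (Finset.univ.filter (fun x => P1 x ∧ Qp x)).card
      + (Finset.univ.filter (fun x => P1 x ∧ ¬ Qp x)).card
      = (Finset.univ.filter P1).card := by
    have h := Finset.card_filter_add_card_filter_not
      (s := Finset.univ.filter P1) (p := Qp)
    rwa [Finset.filter_filter, Finset.filter_filter] at h
  have c1 : (Finset.univ.filter P1).card = (2^l - 1)^(2^l) := by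
    have h := card_blockwise l (fun _ y => y ≠ (fun _ => true))
    rw [Finset.prod_congr rfl (fun j _ => card_ne_allT l), Finset.prod_const,
      Finset.card_univ, Fintype.card_fin] at h
    exact h
  have c2 : (Finset.univ.filter (fun x => P1 x ∧ ¬ Qp x)).card
      = (2^l - 2)^(2^(l-1)) * (2^l - 1)^(2^l - 2^(l-1)) := by
    have hiff : ∀ x ∈ (Finset.univ : Finset (Fin (l*2^l) → Bool)),
        (P1 x ∧ ¬ Qp x) ↔ (∀ j, (fun t => x (B l (j,t))) ≠ (fun _ => true)
          ∧ (j ∈ S → (fun t => x (B l (j,t))) ≠ pat j)) := by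
      intro x _
      rw [hP1def, hQpdef]
      constructor
      · rintro ⟨h1, h2⟩ j
        exact ⟨h1 j, fun hjS he => h2 ⟨j, hjS, he⟩⟩
      · intro h
        exact ⟨fun j => (h j).1, fun ⟨j, hjS, he⟩ => (h j).2 hjS he⟩
    rw [Finset.filter_congr hiff,
      card_blockwise l (fun j y => y ≠ (fun _ => true) ∧ (j ∈ S → y ≠ pat j))]
    have hper : ∀ j, (Finset.univ.filter
        (fun y : Fin l → Bool => y ≠ (fun _ => true) ∧ (j ∈ S → y ≠ pat j))).card
        = if j ∈ S then 2^l - 2 else 2^l - 1 := by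
      intro j
      by_cases hj : j ∈ S
      · rw [if_pos hj]
        have hiff2 : ∀ y ∈ (Finset.univ : Finset (Fin l → Bool)),
            (y ≠ (fun _ => true) ∧ (j ∈ S → y ≠ pat j))
              ↔ (y ≠ (fun _ => true) ∧ y ≠ pat j) := by
          intro y _
          simp [hj]
        rw [Finset.filter_congr hiff2]
        exact card_ne_two l (pat j) (hpatne j)
      · rw [if_neg hj]
        have hiff2 : ∀ y ∈ (Finset.univ : Finset (Fin l → Bool)),
            (y ≠ (fun _ => true) ∧ (j ∈ S → y ≠ pat j))
              ↔ (y ≠ (fun _ => true)) := by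
          intro y _
          simp [hj]
        rw [Finset.filter_congr hiff2]
        exact card_ne_allT l
    rw [Finset.prod_congr rfl (fun j _ => hper j)]
    rw [← Finset.prod_mul_prod_compl S]
    rw [Finset.prod_congr rfl (fun j hj => if_pos hj),
      Finset.prod_congr rfl (fun j hj => if_neg (Finset.mem_compl.mp hj)),
      Finset.prod_const, Finset.prod_const, hScard,
      Finset.card_compl, Fintype.card_fin, hScard]
  have hcardE : (2:ℝ)^(l*2^l)/32 ≤ ((Finset.univ.filter (fun x => P1 x ∧ Qp x)).card : ℝ) := by
    have h1l : (1:ℕ) ≤ 2^l := Nat.one_le_two_pow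
    have h2l : (2:ℕ) ≤ 2^l := by
      calc (2:ℕ) = 2^1 := by norm_num
      _ ≤ 2^l := Nat.pow_le_pow_right (by norm_num) (by omega)
    have hle : (2^l - 2 : ℕ)^(2^(l-1)) * (2^l - 1)^(2^l - 2^(l-1)) ≤ (2^l - 1)^(2^l) := by
      have e : 2^l = 2^(l-1) + (2^l - 2^(l-1)) := by
        have : 2^(l-1) ≤ 2^l := Nat.pow_le_pow_right (by norm_num) (by omega)
        omega
      calc (2^l - 2 : ℕ)^(2^(l-1)) * (2^l - 1)^(2^l - 2^(l-1))
          ≤ (2^l - 1 : ℕ)^(2^(l-1)) * (2^l - 1)^(2^l - 2^(l-1)) := by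
            apply Nat.mul_le_mul_right
            exact Nat.pow_le_pow_left (by omega) _
        _ = (2^l - 1 : ℕ)^(2^l) := by rw [← pow_add, ← e]
    have heq : (Finset.univ.filter (fun x => P1 x ∧ Qp x)).card
        = (2^l - 1)^(2^l) - (2^l - 2)^(2^(l-1)) * (2^l - 1)^(2^l - 2^(l-1)) := by
      omega
    rw [heq]
    have hcast : (((2^l - 1)^(2^l) - (2^l - 2)^(2^(l-1)) * (2^l - 1)^(2^l - 2^(l-1)) : ℕ) : ℝ)
        = ((2^l:ℝ) - 1)^(2^l) - ((2^l:ℝ) - 2)^(2^(l-1)) * ((2^l:ℝ) - 1)^(2^l - 2^(l-1)) := by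
      rw [Nat.cast_sub hle]
      push_cast [Nat.cast_sub h1l, Nat.cast_sub h2l]
      ring
    rw [hcast]
    exact count_arith l hl
  -- ASSEMBLE
  have hnn : ∀ x, 0 ≤ naCost (l*2^l) (myf l) (myc l) π x :=
    fun x => Finset.sum_nonneg (fun i _ => (myc_pos l i).le)
  unfold naExpCost
  have hw : ∀ x : Fin (l*2^l) → Bool,
      prodWeight (l*2^l) (fun _ => 1/2) x * naCost (l*2^l) (myf l) (myc l) π x
        = (1/2)^(l*2^l) * naCost (l*2^l) (myf l) (myc l) π x := by
    intro x; rw [prodWeight_uniform]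
  simp only [hw]
  rw [← Finset.mul_sum]
  have hsum1 : ∑ x ∈ Finset.univ.filter (fun x => P1 x ∧ Qp x),
      naCost (l*2^l) (myf l) (myc l) π x
      ≤ ∑ x : Fin (l*2^l) → Bool, naCost (l*2^l) (myf l) (myc l) π x :=
    Finset.sum_le_sum_of_subset_of_nonneg (Finset.filter_subset _ _)
      (fun x _ _ => hnn x)
  have hsum2 : ((Finset.univ.filter (fun x => P1 x ∧ Qp x)).card : ℝ)
        * ((2:ℝ)^(l-1) * 2^(l-1))
      ≤ ∑ x ∈ Finset.univ.filter (fun x => P1 x ∧ Qp x),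
          naCost (l*2^l) (myf l) (myc l) π x := by
    have := Finset.card_nsmul_le_sum (Finset.univ.filter (fun x => P1 x ∧ Qp x))
      (naCost (l*2^l) (myf l) (myc l) π) ((2:ℝ)^(l-1) * 2^(l-1))
      (fun x hx => key x (Finset.mem_filter.mp hx).2.1 (Finset.mem_filter.mp hx).2.2)
    rw [nsmul_eq_mul] at this
    exact this
  have hchain : (2:ℝ)^(l*2^l)/32 * ((2:ℝ)^(l-1) * 2^(l-1))
      ≤ ∑ x : Fin (l*2^l) → Bool, naCost (l*2^l) (myf l) (myc l) π x := by
    calc (2:ℝ)^(l*2^l)/32 * ((2:ℝ)^(l-1) * 2^(l-1))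
        ≤ ((Finset.univ.filter (fun x => P1 x ∧ Qp x)).card : ℝ)
            * ((2:ℝ)^(l-1) * 2^(l-1)) := by
          apply mul_le_mul_of_nonneg_right hcardE (by positivity)
      _ ≤ _ := le_trans hsum2 hsum1
  calc (2:ℝ)^(l-1) * 2^(l-1) / 32
      = (1/2)^(l*2^l) * ((2:ℝ)^(l*2^l)/32 * ((2:ℝ)^(l-1) * 2^(l-1))) := by
        rw [one_div, inv_pow]
        field_simp
    _ ≤ (1/2)^(l*2^l) * ∑ x : Fin (l*2^l) → Bool, naCost (l*2^l) (myf l) (myc l) π x :=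
        mul_le_mul_of_nonneg_left hchain (by positivity)

lemma OPTN_ge (l : ℕ) (hl : 2 ≤ l) :
    (2:ℝ)^(l-1) * 2^(l-1) / 32 ≤ OPTN (l*2^l) (myf l) (myc l) (fun _ => 1/2) := by
  have hne : Set.Nonempty { r : ℝ | ∃ π : Equiv.Perm (Fin (l*2^l)),
      r = naExpCost (l*2^l) (myf l) (myc l) (fun _ => 1/2) π } :=
    ⟨naExpCost (l*2^l) (myf l) (myc l) (fun _ => 1/2) 1, ⟨1, rfl⟩⟩
  refine le_csInf hne ?_
  rintro r ⟨π, rfl⟩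
  exact naExpCost_ge l hl π

lemma sq_le_rpow_eventually (ε : ℝ) (hε : 0 < ε) :
    ∃ L : ℕ, ∀ l : ℕ, L ≤ l → (l:ℝ)^2 ≤ ((2:ℝ)^l) ^ ε := by
  have hlog2 : 0 < Real.log 2 := Real.log_pos (by norm_num)
  refine ⟨⌈(4/(ε*Real.log 2))^2⌉₊, ?_⟩
  intro l hL
  have hl : (4/(ε*Real.log 2))^2 ≤ (l:ℝ) :=
    le_trans (Nat.le_ceil _) (by exact_mod_cast hL)
  have hl0 : (0:ℝ) ≤ l := le_trans (by positivity) hl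
  have hrw : ((2:ℝ)^l) ^ ε = Real.exp (ε * ((l:ℝ) * Real.log 2)) := by
    rw [← Real.rpow_natCast 2 l, ← Real.rpow_mul (by norm_num),
      Real.rpow_def_of_pos (by norm_num)]
    congr 1
    ring
  set z : ℝ := ε * ((l:ℝ) * Real.log 2) with hz
  have hz0 : 0 ≤ z := by positivity
  have h1 : z/4 ≤ Real.exp (z/4) := by linarith [Real.add_one_le_exp (z/4)]
  have h2 : (Real.exp (z/4))^4 = Real.exp z := by
    rw [← Real.exp_nat_mul]
    congr 1
    push_cast
    ring
  have h3 : (z/4)^4 ≤ Real.exp z := by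
    rw [← h2]
    exact pow_le_pow_left₀ (by positivity) h1 4
  have h4 : (l:ℝ)^2 ≤ (z/4)^4 := by
    have hq : z/4 = (l:ℝ) * (ε*Real.log 2/4) := by rw [hz]; ring
    have h6 : 1 ≤ (l:ℝ) * (ε*Real.log 2/4)^2 := by
      have hone : (4/(ε*Real.log 2))^2 * (ε*Real.log 2/4)^2 = 1 := by
        field_simp
      calc (1:ℝ) = (4/(ε*Real.log 2))^2 * (ε*Real.log 2/4)^2 := hone.symm
        _ ≤ (l:ℝ) * (ε*Real.log 2/4)^2 :=
            mul_le_mul_of_nonneg_right hl (by positivity)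
    have h5 : (l:ℝ) ≤ ((l:ℝ) * (ε*Real.log 2/4))^2 := by
      calc (l:ℝ) = (l:ℝ)*1 := by ring
        _ ≤ (l:ℝ) * ((l:ℝ)*(ε*Real.log 2/4)^2) := mul_le_mul_of_nonneg_left h6 hl0
        _ = ((l:ℝ) * (ε*Real.log 2/4))^2 := by ring
    calc (l:ℝ)^2 ≤ (((l:ℝ)*(ε*Real.log 2/4))^2)^2 := pow_le_pow_left₀ hl0 h5 2
      _ = (z/4)^4 := by rw [hq]; ring
  rw [hrw]
  linarith

end SBFE

/-- There is a constant `K > 0` such that for every `ε > 0` there exists `N_ε` such that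
for every `ℓ ≥ 1` with `n := ℓ·2^ℓ > N_ε` there are a monotone read-once DNF `f` on `n`
variables consisting of `2^ℓ` pairwise-disjoint terms of `ℓ` variables each, and a
positive cost vector `c`, such that under the uniform distribution
`OPT_N(f,c) ≥ K·(n^{1-ε}/log₂ n)·OPT_A(f,c)`. -/
theorem stmt6 :
    ∃ K : ℝ, 0 < K ∧
      ∀ ε : ℝ, 0 < ε →
        ∃ N : ℕ, ∀ l : ℕ, 1 ≤ l → N < l * 2 ^ l →
          ∃ (f : (Fin (l * 2 ^ l) → Bool) → Bool)
            (T : Fin (2 ^ l) → Finset (Fin (l * 2 ^ l)))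
            (c : Fin (l * 2 ^ l) → ℝ),
            (∀ j, (T j).card = l) ∧
            IsReadOnceDNF (l * 2 ^ l) (2 ^ l) T f ∧
            (∀ i, 0 < c i) ∧
            K * (((l * 2 ^ l : ℕ) : ℝ) ^ (1 - ε) / Real.logb 2 (l * 2 ^ l)) *
                OPTA (l * 2 ^ l) f c (fun _ => 1/2) ≤
              OPTN (l * 2 ^ l) f c (fun _ => 1/2) := by
  refine ⟨1/128, by norm_num, ?_⟩
  intro ε hε
  obtain ⟨L₁, hL₁⟩ := SBFE.sq_le_rpow_eventually ε hε
  refine ⟨(max L₁ 2) * 2^(max L₁ 2), ?_⟩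
  intro l hl1 hn
  have hlL : max L₁ 2 < l := by
    by_contra hcon
    push_neg at hcon
    have : l * 2^l ≤ (max L₁ 2) * 2^(max L₁ 2) :=
      Nat.mul_le_mul hcon (Nat.pow_le_pow_right (by norm_num) hcon)
    omega
  have hl2 : 2 ≤ l := (lt_of_le_of_lt (le_max_right _ _) hlL).le
  have hlL1 : L₁ ≤ l := (lt_of_le_of_lt (le_max_left _ _) hlL).le
  refine ⟨SBFE.myf l, SBFE.myT l, SBFE.myc l, fun j => SBFE.myT_card l j,
    SBFE.my_dnf l (by omega), fun i => SBFE.myc_pos l i, ?_⟩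
  have hlpos : (0:ℝ) < (l:ℝ) := by
    have : (0:ℕ) < l := by omega
    exact_mod_cast this
  have hnR : ((l * 2^l : ℕ) : ℝ) = (l:ℝ) * 2^l := by push_cast; ring
  have hnRpos : (0:ℝ) < ((l * 2^l : ℕ) : ℝ) := by rw [hnR]; positivity
  have hnR2 : (2:ℝ) ≤ (l:ℝ) * 2^l := by
    have h1 : (1:ℝ) ≤ 2^l := by
      exact_mod_cast (Nat.one_le_two_pow : (1:ℕ) ≤ 2^l)
    calc (2:ℝ) = 2*1 := by ring
      _ ≤ (l:ℝ) * 2^l :=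
          mul_le_mul (by exact_mod_cast hl2) h1 (by norm_num) hlpos.le
  have hlog2 : (0:ℝ) < Real.log 2 := Real.log_pos (by norm_num)
  have hlogb : 1 ≤ Real.logb 2 ((l:ℝ) * 2^l) := by
    rw [Real.logb, le_div_iff₀ hlog2, one_mul]
    apply Real.log_le_log (by norm_num) hnR2
  have hlogbpos : (0:ℝ) < Real.logb 2 ((l:ℝ) * 2^l) := lt_of_lt_of_le one_pos hlogb
  have h2l_le : (2:ℝ)^l ≤ ((l * 2^l : ℕ) : ℝ) := by
    rw [hnR]
    calc (2:ℝ)^l = 1 * 2^l := (one_mul _).symm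
      _ ≤ (l:ℝ) * 2^l := by
          apply mul_le_mul_of_nonneg_right _ (by positivity)
          exact_mod_cast hl1
  have hpow : (l:ℝ)^2 ≤ ((l * 2^l : ℕ) : ℝ) ^ ε :=
    le_trans (hL₁ l hlL1) (Real.rpow_le_rpow (by positivity) h2l_le hε.le)
  have hXle : ((l * 2^l : ℕ) : ℝ) ^ (1-ε) ≤ ((l * 2^l : ℕ) : ℝ) / (l:ℝ)^2 := by
    rw [Real.rpow_sub hnRpos, Real.rpow_one]
    apply div_le_div_of_nonneg_left hnRpos.le (by positivity) hpow
  have hX0 : (0:ℝ) ≤ ((l * 2^l : ℕ) : ℝ) ^ (1-ε) := Real.rpow_nonneg hnRpos.le _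
  have hA := SBFE.OPTA_le l
  have hN := SBFE.OPTN_ge l hl2
  have hcoeff : (0:ℝ) ≤ 1/128 * (((l * 2^l : ℕ) : ℝ) ^ (1-ε) / Real.logb 2 ((l:ℝ) * 2^l)) :=
    mul_nonneg (by norm_num) (div_nonneg hX0 hlogbpos.le)
  calc 1/128 * (((l * 2^l : ℕ) : ℝ) ^ (1-ε) / Real.logb 2 ((l:ℝ) * 2^l))
        * OPTA (l * 2^l) (SBFE.myf l) (SBFE.myc l) (fun _ => 1/2)
      ≤ 1/128 * (((l * 2^l : ℕ) : ℝ) ^ (1-ε) / Real.logb 2 ((l:ℝ) * 2^l))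
        * ((l:ℝ) * 2^l) := mul_le_mul_of_nonneg_left hA hcoeff
    _ ≤ 1/128 * ((l * 2^l : ℕ) : ℝ) ^ (1-ε) * ((l:ℝ) * 2^l) := by
        apply mul_le_mul_of_nonneg_right _ (by positivity)
        have hd : ((l * 2^l : ℕ) : ℝ) ^ (1-ε) / Real.logb 2 ((l:ℝ) * 2^l)
            ≤ ((l * 2^l : ℕ) : ℝ) ^ (1-ε) := div_le_self hX0 hlogb
        linarith
    _ ≤ 1/128 * (((l * 2^l : ℕ) : ℝ) / (l:ℝ)^2) * ((l:ℝ) * 2^l) := by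
        apply mul_le_mul_of_nonneg_right
          (mul_le_mul_of_nonneg_left hXle (by norm_num)) (by positivity)
    _ = 1/128 * ((2:ℝ)^l * 2^l) := by
        rw [hnR]
        field_simp
    _ = (2:ℝ)^(l-1) * 2^(l-1) / 32 := by
        have h2 : (2:ℝ)^l = 2*2^(l-1) := by
          rw [← pow_succ']
          congr 1
          omega
        rw [h2]
        ring
    _ ≤ OPTN (l * 2^l) (SBFE.myf l) (SBFE.myc l) (fun _ => 1/2) := hN
end

section
/- Let L be a positive integer, let p_1 ≥ p_2 ≥ … ≥ p_L ≥ 0 be real numbers, let p > 0 be a real number with p ≥ p_1, and set L' = ⌊(∑_{ℓ=1}^{L} p_ℓ)/p⌋. Then ∑_{ℓ=1}^{L} ℓ · p_ℓ ≥ ∑_{ℓ=1}^{L'} ℓ · p (the right-hand side equals p · L'(L'+1)/2). -/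
lemma abel_aux (f : ℕ → ℝ) (n : ℕ) :
    ∑ l ∈ Finset.Icc 1 n, (l : ℝ) * f l
      = ∑ k ∈ Finset.range n,
          ((∑ l ∈ Finset.Icc 1 n, f l) - ∑ l ∈ Finset.Icc 1 k, f l) := by
  induction n with
  | zero => simp
  | succ n ih =>
    rw [Finset.sum_range_succ,
      Finset.sum_Icc_succ_top (show 1 ≤ n + 1 by omega) (fun l => (l : ℝ) * f l),
      Finset.sum_Icc_succ_top (show 1 ≤ n + 1 by omega) f, ih]
    have h : ∀ k ∈ Finset.range n,
        ((∑ l ∈ Finset.Icc 1 n, f l) + f (n + 1)) - ∑ l ∈ Finset.Icc 1 k, f l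
          = ((∑ l ∈ Finset.Icc 1 n, f l) - ∑ l ∈ Finset.Icc 1 k, f l) + f (n + 1) := by
      intro k _; ring
    rw [Finset.sum_congr rfl h, Finset.sum_add_distrib, Finset.sum_const,
      Finset.card_range]
    push_cast
    ring

lemma gauss_aux (n : ℕ) : ∑ l ∈ Finset.Icc 1 n, (l : ℝ) = n * (n + 1) / 2 := by
  induction n with
  | zero => simp
  | succ n ih =>
    rw [Finset.sum_Icc_succ_top (show 1 ≤ n + 1 by omega), ih]
    push_cast
    ring

/-- Let `p_1 ≥ p_2 ≥ … ≥ p_L ≥ 0`, let `p ≥ p_1` with `p > 0`, and let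
`L' = ⌊(∑_{ℓ=1}^L p_ℓ)/p⌋`. Then `∑_{ℓ=1}^L ℓ·p_ℓ ≥ ∑_{ℓ=1}^{L'} ℓ·p`
(and the right-hand side equals `p·L'(L'+1)/2`). -/
theorem stmt9 (L : ℕ) (hL : 1 ≤ L) (q : ℕ → ℝ)
    (hmono : ∀ l, 1 ≤ l → l + 1 ≤ L → q (l + 1) ≤ q l)
    (hlast : 0 ≤ q L)
    (p : ℝ) (hp : 0 < p) (hp1 : q 1 ≤ p)
    (L' : ℕ) (hL' : L' = ⌊(∑ l ∈ Finset.Icc 1 L, q l) / p⌋₊) :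
    (∑ l ∈ Finset.Icc 1 L', (l : ℝ) * p ≤ ∑ l ∈ Finset.Icc 1 L, (l : ℝ) * q l) ∧
    ∑ l ∈ Finset.Icc 1 L', (l : ℝ) * p = p * L' * (L' + 1) / 2 := by
  -- monotonicity on [1, L]
  have hmono' : ∀ l m, 1 ≤ l → l ≤ m → m ≤ L → q m ≤ q l := by
    intro l m hl hlm hmL
    induction m with
    | zero => omega
    | succ m ih =>
      rcases Nat.eq_or_lt_of_le hlm with h | h
      · rw [h]
      · exact le_trans (hmono m (by omega) hmL) (ih (by omega) (by omega))
  have hq0 : ∀ l, 1 ≤ l → l ≤ L → 0 ≤ q l := fun l hl hlL =>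
    le_trans hlast (hmono' l L hl hlL le_rfl)
  have hqp : ∀ l, 1 ≤ l → l ≤ L → q l ≤ p := fun l hl hlL =>
    le_trans (hmono' 1 l le_rfl hl hlL) hp1
  set S : ℝ := ∑ l ∈ Finset.Icc 1 L, q l with hS
  have hQmono : ∀ k, k ≤ L → ∑ l ∈ Finset.Icc 1 k, q l ≤ S := by
    intro k hk
    apply Finset.sum_le_sum_of_subset_of_nonneg
    · exact Finset.Icc_subset_Icc_right hk
    · intro i hi _
      simp only [Finset.mem_Icc] at hi
      exact hq0 i hi.1 hi.2
  have hQub : ∀ k, k ≤ L → ∑ l ∈ Finset.Icc 1 k, q l ≤ (k : ℝ) * p := by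
    intro k hk
    calc ∑ l ∈ Finset.Icc 1 k, q l ≤ ∑ l ∈ Finset.Icc 1 k, p := by
          apply Finset.sum_le_sum
          intro i hi
          simp only [Finset.mem_Icc] at hi
          exact hqp i hi.1 (le_trans hi.2 hk)
      _ = (k : ℝ) * p := by
          rw [Finset.sum_const, Nat.card_Icc]
          simp
  have hSL : S ≤ (L : ℝ) * p := hQub L le_rfl
  have hS0 : 0 ≤ S := Finset.sum_nonneg fun i hi => by
    simp only [Finset.mem_Icc] at hi; exact hq0 i hi.1 hi.2
  have hL'L : L' ≤ L := by
    rw [hL']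
    calc ⌊S / p⌋₊ ≤ ⌊(L : ℝ)⌋₊ := by
          apply Nat.floor_le_floor
          rw [div_le_iff₀ hp]
          exact hSL
      _ = L := Nat.floor_natCast L
  have hpL' : (L' : ℝ) * p ≤ S := by
    have := Nat.floor_le (div_nonneg hS0 hp.le)
    rw [← hL'] at this
    calc (L' : ℝ) * p ≤ S / p * p := by
          exact mul_le_mul_of_nonneg_right this hp.le
      _ = S := div_mul_cancel₀ S hp.ne'
  constructor
  · rw [abel_aux, abel_aux q]
    have hconst : ∀ m : ℕ, ∑ l ∈ Finset.Icc 1 m, p = (m : ℝ) * p := by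
      intro m; rw [Finset.sum_const, Nat.card_Icc]; simp
    calc ∑ k ∈ Finset.range L',
            ((∑ l ∈ Finset.Icc 1 L', p) - ∑ l ∈ Finset.Icc 1 k, p)
        ≤ ∑ k ∈ Finset.range L', (S - ∑ l ∈ Finset.Icc 1 k, q l) := by
          apply Finset.sum_le_sum
          intro k hk
          simp only [Finset.mem_range] at hk
          rw [hconst, hconst]
          have h1 : (L' : ℝ) * p ≤ S := hpL'
          have h2 : ∑ l ∈ Finset.Icc 1 k, q l ≤ (k : ℝ) * p :=
            hQub k (by omega)
          linarith
      _ ≤ ∑ k ∈ Finset.range L, (S - ∑ l ∈ Finset.Icc 1 k, q l) := by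
          apply Finset.sum_le_sum_of_subset_of_nonneg
          · exact Finset.range_subset_range.mpr hL'L
          · intro k hk _
            simp only [Finset.mem_range] at hk
            have := hQmono k (by omega)
            linarith
  · rw [← Finset.sum_mul, gauss_aux]
    ring
end

section
/- Fix ε ∈ (0, 1/2] and an integer d ≥ 1. If each edge of the complete rooted binary tree of depth d is independently set to 1 with probability (1+ε)/2, then the probability that at least one leaf is alive (i.e., some root-to-leaf path has all its edges equal to 1) is at least ε. -/
open Finset

/-- Nodes of the complete rooted binary tree of depth `d` are numbered `1, …, 2^(d+1)-1`,
with root `1` and the children of `v` being `2v` and `2v+1`; the edge joining a non-root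
node `v` to its parent `v/2` is identified with the variable index `v - 2 ∈ Fin (2^(d+1)-2)`.
`edgeVal d x v` is the value of the edge above node `v`. -/
def edgeVal (d : ℕ) (x : Fin (2 ^ (d + 1) - 2) → Bool) (v : ℕ) : Bool :=
  if h : v - 2 < 2 ^ (d + 1) - 2 then x ⟨v - 2, h⟩ else false

/-- The leaf at node `v` (where `2^d ≤ v < 2^(d+1)`) is alive: every edge on the path
from the root to `v` has value `1`. -/
def leafAlive (d : ℕ) (x : Fin (2 ^ (d + 1) - 2) → Bool) (v : ℕ) : Bool :=
  decide (∀ j ∈ Finset.range d, edgeVal d x (v / 2 ^ j) = true)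

/-- The tree-connectivity function of the complete rooted binary tree of depth `d`:
true iff at least one leaf is alive. -/
def treeConn (d : ℕ) (x : Fin (2 ^ (d + 1) - 2) → Bool) : Bool :=
  decide (∃ v ∈ Finset.Ico ((2 : ℕ) ^ d) ((2 : ℕ) ^ (d + 1)), leafAlive d x v = true)

noncomputable def Wc {ι : Type*} [Fintype ι] (p : ℝ) (x : ι → Bool) : ℝ :=
  ∏ i, if x i then p else 1 - p

lemma Wc_total {ι : Type*} [Fintype ι] [DecidableEq ι] (p : ℝ) :
    ∑ x : ι → Bool, Wc p x = 1 := by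
  classical
  have h := Finset.prod_univ_sum (fun _ : ι => (univ : Finset Bool))
      (fun _ b => if b then p else 1 - p)
  rw [Fintype.piFinset_univ] at h
  simp only [Wc]
  rw [← h]
  apply Finset.prod_eq_one
  intro i _
  simp

lemma block_subst {ι κ : Type*} [Fintype ι] [DecidableEq ι] [Fintype κ] [DecidableEq κ]
    (w : κ → ℝ) (H : κ → Bool) (Φ : (ι → Bool) → ℝ) :
    ∑ c : ι → κ, (∏ i, w (c i)) * Φ (fun i => H (c i)) =
    ∑ x : ι → Bool,
      (∏ i, if x i then (∑ k ∈ univ.filter (fun k => H k = true), w k)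
            else (∑ k ∈ univ.filter (fun k => H k = false), w k)) * Φ x := by
  classical
  have key : ∀ x : ι → Bool,
      (∏ i, if x i then (∑ k ∈ univ.filter (fun k => H k = true), w k)
            else (∑ k ∈ univ.filter (fun k => H k = false), w k))
      = ∑ c ∈ univ.filter (fun c : ι → κ => (fun i => H (c i)) = x), ∏ i, w (c i) := by
    intro x
    have h1 : (∏ i, if x i then (∑ k ∈ univ.filter (fun k => H k = true), w k)
            else (∑ k ∈ univ.filter (fun k => H k = false), w k))
        = ∏ i, ∑ k ∈ univ.filter (fun k => H k = x i), w k := by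
      apply Finset.prod_congr rfl
      intro i _
      cases hxi : x i <;> simp
    rw [h1, Finset.prod_univ_sum]
    apply Finset.sum_congr
    · ext c
      simp only [Fintype.mem_piFinset, mem_filter, mem_univ, true_and]
      constructor
      · intro h; funext i; exact h i
      · intro h i; exact congrFun h i
    · intros; rfl
  calc ∑ c : ι → κ, (∏ i, w (c i)) * Φ (fun i => H (c i))
      = ∑ x : ι → Bool, ∑ c ∈ univ.filter (fun c : ι → κ => (fun i => H (c i)) = x),
          (∏ i, w (c i)) * Φ (fun i => H (c i)) := by
        rw [Finset.sum_fiberwise_eq_sum_filter univ univ (fun c : ι → κ => fun i => H (c i))]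
        simp
    _ = ∑ x : ι → Bool, (∑ c ∈ univ.filter (fun c : ι → κ => (fun i => H (c i)) = x),
          ∏ i, w (c i)) * Φ x := by
        apply Finset.sum_congr rfl
        intro x _
        rw [Finset.sum_mul]
        apply Finset.sum_congr rfl
        intro c hc
        simp only [mem_filter] at hc
        rw [hc.2]
    _ = _ := by
        apply Finset.sum_congr rfl
        intro x _
        rw [key]

noncomputable def rr (h : Bool → Bool → Bool) (p q : ℝ) : ℝ :=
  ∑ k ∈ (univ : Finset (Bool × Bool)).filter (fun k => h k.1 k.2 = true),
    (if k.1 then p else 1 - p) * (if k.2 then q else 1 - q)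

lemma rr_compl (h : Bool → Bool → Bool) (p q : ℝ) :
    ∑ k ∈ (univ : Finset (Bool × Bool)).filter (fun k => h k.1 k.2 = false),
      (if k.1 then p else 1 - p) * (if k.2 then q else 1 - q) = 1 - rr h p q := by
  have htot : ∑ k : Bool × Bool, (if k.1 then p else 1 - p) * (if k.2 then q else 1 - q) = 1 := by
    rw [Fintype.sum_prod_type]
    simp
    ring
  have hsplit := Finset.sum_filter_add_sum_filter_not (univ : Finset (Bool × Bool))
    (fun k => h k.1 k.2 = true)
    (fun k => (if k.1 then p else 1 - p) * (if k.2 then q else 1 - q))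
  rw [htot] at hsplit
  rw [rr]
  have hiff : ∀ k : Bool × Bool, (¬ (h k.1 k.2 = true)) ↔ (h k.1 k.2 = false) := by
    intro k; cases h k.1 k.2 <;> simp
  rw [Finset.filter_congr (fun k _ => hiff k)] at hsplit
  linarith

lemma pair_subst {ι : Type*} [Fintype ι] [DecidableEq ι]
    (p q : ℝ) (h : Bool → Bool → Bool) (Φ : (ι → Bool) → ℝ) :
    ∑ a : ι → Bool, ∑ b : ι → Bool,
        Wc p a * (Wc q b * Φ (fun i => h (a i) (b i))) =
    ∑ x : ι → Bool, Wc (rr h p q) x * Φ x := by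
  classical
  have e : (ι → Bool × Bool) → ((ι → Bool) × (ι → Bool)) :=
    fun c => (fun i => (c i).1, fun i => (c i).2)
  have hbij : Function.Bijective (fun c : ι → Bool × Bool => ((fun i => (c i).1, fun i => (c i).2) : (ι → Bool) × (ι → Bool))) := by
    constructor
    · intro c c' hcc
      funext i
      have h1 := congrFun (congrArg Prod.fst hcc) i
      have h2 := congrFun (congrArg Prod.snd hcc) i
      exact Prod.ext h1 h2
    · intro ⟨a, b⟩
      exact ⟨fun i => (a i, b i), rfl⟩
  have step1 : ∑ a : ι → Bool, ∑ b : ι → Bool,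
        Wc p a * (Wc q b * Φ (fun i => h (a i) (b i))) =
      ∑ c : ι → Bool × Bool,
        (∏ i, (if (c i).1 then p else 1 - p) * (if (c i).2 then q else 1 - q)) *
          Φ (fun i => h (c i).1 (c i).2) := by
    have hp : ∑ a : ι → Bool, ∑ b : ι → Bool,
        Wc p a * (Wc q b * Φ (fun i => h (a i) (b i))) =
        ∑ ab : (ι → Bool) × (ι → Bool),
          Wc p ab.1 * (Wc q ab.2 * Φ (fun i => h (ab.1 i) (ab.2 i))) :=
      (Fintype.sum_prod_type (fun ab : (ι → Bool) × (ι → Bool) =>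
        Wc p ab.1 * (Wc q ab.2 * Φ (fun i => h (ab.1 i) (ab.2 i))))).symm
    rw [hp]
    refine (Fintype.sum_bijective _ hbij _ _ ?_).symm
    intro c
    simp only [Wc]
    rw [Finset.prod_mul_distrib]
    ring
  rw [step1]
  have step2 := block_subst (ι := ι) (κ := Bool × Bool)
      (fun k => (if k.1 then p else 1 - p) * (if k.2 then q else 1 - q))
      (fun k => h k.1 k.2) Φ
  rw [step2]
  apply Finset.sum_congr rfl
  intro x _
  congr 1
  rw [Wc]
  apply Finset.prod_congr rfl
  intro i _
  rw [rr_compl]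
  rfl

lemma rr_and (p q : ℝ) : rr (fun a b => a && b) p q = p * q := by
  rw [rr]
  rw [show (univ : Finset (Bool × Bool)).filter (fun k => (k.1 && k.2) = true)
      = {(true, true)} from by decide]
  simp

lemma rr_or (p q : ℝ) : rr (fun a b => a || b) p q = 1 - (1 - p) * (1 - q) := by
  rw [rr]
  rw [show (univ : Finset (Bool × Bool)).filter (fun k => (k.1 || k.2) = true)
      = {(true, true), (true, false), (false, true)} from by decide]
  rw [Finset.sum_insert (by decide), Finset.sum_insert (by decide), Finset.sum_singleton]
  simp
  ring

def join (m n N : ℕ) (h : N = m + n) (a : Fin m → Bool) (b : Fin n → Bool) :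
    Fin N → Bool :=
  fun i => if hi : (i : ℕ) < m then a ⟨i, hi⟩ else b ⟨(i : ℕ) - m, by omega⟩

lemma join_lt {m n N : ℕ} (h : N = m + n) (a : Fin m → Bool) (b : Fin n → Bool)
    (i : Fin N) (hi : (i : ℕ) < m) : join m n N h a b i = a ⟨i, hi⟩ := by
  simp [join, hi]

lemma join_ge {m n N : ℕ} (h : N = m + n) (a : Fin m → Bool) (b : Fin n → Bool)
    (i : Fin N) (hi : ¬ (i : ℕ) < m) :
    join m n N h a b i = b ⟨(i : ℕ) - m, by omega⟩ := by
  simp [join, hi]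

lemma sum_join (m n N : ℕ) (h : N = m + n) (Φ : (Fin N → Bool) → ℝ) :
    ∑ x : Fin N → Bool, Φ x =
    ∑ a : Fin m → Bool, ∑ b : Fin n → Bool, Φ (join m n N h a b) := by
  have hbij : Function.Bijective
      (fun ab : (Fin m → Bool) × (Fin n → Bool) => join m n N h ab.1 ab.2) := by
    rw [Fintype.bijective_iff_injective_and_card]
    constructor
    · rintro ⟨a, b⟩ ⟨a', b'⟩ hab
      simp only [Prod.mk.injEq]
      constructor
      · funext i
        have := congrFun hab ⟨i, by omega⟩
        simp only at this
        rw [join_lt h a b ⟨i, by omega⟩ (by simpa using i.isLt),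
          join_lt h a' b' ⟨i, by omega⟩ (by simpa using i.isLt)] at this
        simpa using this
      · funext j
        have := congrFun hab ⟨m + j, by omega⟩
        simp only at this
        rw [join_ge h a b ⟨m + j, by omega⟩ (by simp),
          join_ge h a' b' ⟨m + j, by omega⟩ (by simp)] at this
        have hj : (⟨m + (j : ℕ) - m, by omega⟩ : Fin n) = j := Fin.ext (by simp)
        rwa [hj] at this
    · simp [Fintype.card_fun, h, pow_add]
  have := (Fintype.sum_bijective _ hbij
    (fun ab : (Fin m → Bool) × (Fin n → Bool) => Φ (join m n N h ab.1 ab.2)) Φ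
    (fun ab => rfl)).symm
  rw [this, Fintype.sum_prod_type]

lemma Wc_join (p : ℝ) (m n N : ℕ) (h : N = m + n) (a : Fin m → Bool) (b : Fin n → Bool) :
    Wc p (join m n N h a b) = Wc p a * Wc p b := by
  have hbij : Function.Bijective
      (fun s : Fin m ⊕ Fin n => (Sum.elim (fun i : Fin m => (⟨i, by omega⟩ : Fin N))
        (fun j : Fin n => (⟨m + j, by omega⟩ : Fin N)) s)) := by
    rw [Fintype.bijective_iff_injective_and_card]
    constructor
    · rintro (i | i) (j | j) hij <;> simp_all <;> omega
    · simp [h]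
  rw [Wc, ← Fintype.prod_bijective _ hbij
    (fun s : Fin m ⊕ Fin n => if join m n N h a b (Sum.elim (fun i : Fin m => (⟨i, by omega⟩ : Fin N))
        (fun j : Fin n => (⟨m + j, by omega⟩ : Fin N)) s) then p else 1 - p)
    _ (fun s => rfl)]
  rw [Fintype.prod_sum_type]
  congr 1
  · apply Finset.prod_congr rfl
    intro i _
    simp only [Sum.elim_inl]
    have hv : join m n N h a b ⟨i, by omega⟩ = a i := by
      rw [join_lt h a b ⟨i, by omega⟩ (by simpa using i.isLt)]
    simp [hv]
  · apply Finset.prod_congr rfl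
    intro j _
    simp only [Sum.elim_inr]
    have hv : join m n N h a b ⟨m + j, by omega⟩ = b j := by
      rw [join_ge h a b ⟨m + j, by omega⟩ (by simp)]
      congr 1
      exact Fin.ext (by simp)
    simp [hv]

def ileave (n N : ℕ) (h : N = 2 * n) (a b : Fin n → Bool) : Fin N → Bool :=
  fun i => if (i : ℕ) % 2 = 0 then a ⟨(i : ℕ) / 2, by omega⟩ else b ⟨(i : ℕ) / 2, by omega⟩

lemma ileave_even {n N : ℕ} (h : N = 2 * n) (a b : Fin n → Bool) (u : Fin n)
    (i : Fin N) (hi : (i : ℕ) = 2 * u) : ileave n N h a b i = a u := by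
  have h2 : (i : ℕ) % 2 = 0 := by omega
  simp only [ileave, h2, if_true]
  congr 1
  exact Fin.ext (by simp; omega)

lemma ileave_odd {n N : ℕ} (h : N = 2 * n) (a b : Fin n → Bool) (u : Fin n)
    (i : Fin N) (hi : (i : ℕ) = 2 * u + 1) : ileave n N h a b i = b u := by
  have h2 : ¬ ((i : ℕ) % 2 = 0) := by omega
  simp only [ileave, h2, if_false]
  congr 1
  exact Fin.ext (by simp; omega)

lemma sum_ileave (n N : ℕ) (h : N = 2 * n) (Φ : (Fin N → Bool) → ℝ) :
    ∑ x : Fin N → Bool, Φ x =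
    ∑ a : Fin n → Bool, ∑ b : Fin n → Bool, Φ (ileave n N h a b) := by
  have hbij : Function.Bijective
      (fun ab : (Fin n → Bool) × (Fin n → Bool) => ileave n N h ab.1 ab.2) := by
    rw [Fintype.bijective_iff_injective_and_card]
    constructor
    · rintro ⟨a, b⟩ ⟨a', b'⟩ hab
      simp only at hab
      simp only [Prod.mk.injEq]
      constructor
      · funext u
        have := congrFun hab ⟨2 * u, by omega⟩
        rwa [ileave_even h a b u _ rfl, ileave_even h a' b' u _ rfl] at this
      · funext u
        have := congrFun hab ⟨2 * u + 1, by omega⟩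
        rwa [ileave_odd h a b u _ rfl, ileave_odd h a' b' u _ rfl] at this
    · simp [Fintype.card_fun, h, two_mul, pow_add]
  have := (Fintype.sum_bijective _ hbij
    (fun ab : (Fin n → Bool) × (Fin n → Bool) => Φ (ileave n N h ab.1 ab.2)) Φ
    (fun ab => rfl)).symm
  rw [this, Fintype.sum_prod_type]

lemma Wc_ileave (p : ℝ) (n N : ℕ) (h : N = 2 * n) (a b : Fin n → Bool) :
    Wc p (ileave n N h a b) = Wc p a * Wc p b := by
  have hbij : Function.Bijective
      (fun s : Fin n ⊕ Fin n => (Sum.elim (fun u : Fin n => (⟨2 * u, by omega⟩ : Fin N))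
        (fun u : Fin n => (⟨2 * u + 1, by omega⟩ : Fin N)) s)) := by
    rw [Fintype.bijective_iff_injective_and_card]
    constructor
    · rintro (u | u) (v | v) huv <;> simp_all [Fin.ext_iff] <;> omega
    · simp [h, two_mul]
  rw [Wc, ← Fintype.prod_bijective _ hbij
    (fun s : Fin n ⊕ Fin n => if ileave n N h a b (Sum.elim (fun u : Fin n => (⟨2 * u, by omega⟩ : Fin N))
        (fun u : Fin n => (⟨2 * u + 1, by omega⟩ : Fin N)) s) then p else 1 - p)
    _ (fun s => rfl)]
  rw [Fintype.prod_sum_type]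
  congr 1
  · apply Finset.prod_congr rfl
    intro u _
    simp only [Sum.elim_inl]
    have hv : ileave n N h a b ⟨2 * u, by omega⟩ = a u := ileave_even h a b u _ rfl
    simp [hv]
  · apply Finset.prod_congr rfl
    intro u _
    simp only [Sum.elim_inr]
    have hv : ileave n N h a b ⟨2 * u + 1, by omega⟩ = b u := ileave_odd h a b u _ rfl
    simp [hv]

lemma two_pow_succ' (d : ℕ) : 2 ^ (d + 1) = 2 * 2 ^ d := by rw [pow_succ]; ring

lemma one_le_two_pow' (d : ℕ) : 1 ≤ 2 ^ d := Nat.one_le_two_pow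

lemma hNsplit (d : ℕ) : 2 ^ (d + 1 + 1) - 2 = (2 ^ (d + 1) - 2) + 2 ^ (d + 1) := by
  have h1 := two_pow_succ' (d + 1)
  have h2 := two_pow_succ' d
  have h3 := one_le_two_pow' d
  omega

def aliveW (d : ℕ) (x : Fin (2 ^ (d + 1) - 2) → Bool) (b : Fin (2 ^ d) → Bool) : Bool :=
  decide (∃ u : Fin (2 ^ d), leafAlive d x (2 ^ d + u) = true ∧ b u = true)

noncomputable def Pd (p : ℝ) (d : ℕ) (β : ℝ) : ℝ :=
  ∑ x : Fin (2 ^ (d + 1) - 2) → Bool, ∑ b : Fin (2 ^ d) → Bool,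
    Wc p x * (Wc β b * (if aliveW d x b then 1 else 0))

lemma edge_mid (d : ℕ) (t : Fin (2 ^ (d + 1) - 2) → Bool) (e : Fin (2 ^ (d + 1)) → Bool)
    (w : ℕ) (hw : 2 ≤ w) (hw2 : w < 2 ^ (d + 1)) :
    edgeVal (d + 1) (join _ _ _ (hNsplit d) t e) w = edgeVal d t w := by
  have h1 := two_pow_succ' (d + 1)
  have h2 := two_pow_succ' d
  have h3 := one_le_two_pow' d
  have c1 : w - 2 < 2 ^ (d + 1 + 1) - 2 := by omega
  have c2 : w - 2 < 2 ^ (d + 1) - 2 := by omega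
  rw [edgeVal, edgeVal, dif_pos c1, dif_pos c2,
    join_lt (hNsplit d) t e ⟨w - 2, c1⟩ (by simpa using c2)]

lemma edge_bot (d : ℕ) (t : Fin (2 ^ (d + 1) - 2) → Bool) (e : Fin (2 ^ (d + 1)) → Bool)
    (v : ℕ) (hv : 2 ^ (d + 1) ≤ v) (hv2 : v < 2 ^ (d + 1 + 1)) :
    edgeVal (d + 1) (join _ _ _ (hNsplit d) t e) v
      = e ⟨v - 2 ^ (d + 1), by omega⟩ := by
  have h1 := two_pow_succ' (d + 1)
  have h2 := two_pow_succ' d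
  have h3 := one_le_two_pow' d
  have c1 : v - 2 < 2 ^ (d + 1 + 1) - 2 := by omega
  rw [edgeVal, dif_pos c1,
    join_ge (hNsplit d) t e ⟨v - 2, c1⟩ (by simp; omega)]
  congr 1
  exact Fin.ext (by simp; omega)

lemma div_pow_bounds (d j v : ℕ) (hj : j < d) (hv : 2 ^ (d + 1) ≤ v)
    (hv2 : v < 2 ^ (d + 1 + 1)) :
    2 ≤ v / 2 ^ (j + 1) ∧ v / 2 ^ (j + 1) < 2 ^ (d + 1) := by
  have hpos : 0 < 2 ^ (j + 1) := Nat.pow_pos (by norm_num)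
  constructor
  · have h1 : 2 ^ (d - j) ≤ v / 2 ^ (j + 1) := by
      rw [Nat.le_div_iff_mul_le hpos]
      have : 2 ^ (d - j) * 2 ^ (j + 1) = 2 ^ (d + 1) := by
        rw [← pow_add]; congr 1; omega
      omega
    have h2 : 2 ≤ 2 ^ (d - j) := by
      have : 2 ^ 1 ≤ 2 ^ (d - j) := Nat.pow_le_pow_right (by norm_num) (by omega)
      simpa using this
    omega
  · have h1 : v / 2 ^ (j + 1) < 2 ^ (d + 1 - j) := by
      rw [Nat.div_lt_iff_lt_mul hpos]
      have : 2 ^ (d + 1 - j) * 2 ^ (j + 1) = 2 ^ (d + 1 + 1) := by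
        rw [← pow_add]; congr 1; omega
      omega
    have h2 : 2 ^ (d + 1 - j) ≤ 2 ^ (d + 1) := Nat.pow_le_pow_right (by norm_num) (by omega)
    omega

lemma div_pow_succ (v j : ℕ) : v / 2 ^ (j + 1) = (v / 2) / 2 ^ j := by
  rw [Nat.div_div_eq_div_mul]
  congr 1
  rw [pow_succ]; ring

lemma leafAlive_split (d : ℕ) (t : Fin (2 ^ (d + 1) - 2) → Bool)
    (e : Fin (2 ^ (d + 1)) → Bool) (v : ℕ) (hv : 2 ^ (d + 1) ≤ v)
    (hv2 : v < 2 ^ (d + 1 + 1)) :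
    leafAlive (d + 1) (join _ _ _ (hNsplit d) t e) v
      = (leafAlive d t (v / 2) && e ⟨v - 2 ^ (d + 1), by omega⟩) := by
  have hiff : (∀ j ∈ Finset.range (d + 1),
        edgeVal (d + 1) (join _ _ _ (hNsplit d) t e) (v / 2 ^ j) = true)
      ↔ ((∀ j ∈ Finset.range d, edgeVal d t ((v / 2) / 2 ^ j) = true)
          ∧ e ⟨v - 2 ^ (d + 1), by omega⟩ = true) := by
    constructor
    · intro H
      refine ⟨fun j hj => ?_, ?_⟩
      · have hj' : j < d := Finset.mem_range.mp hj
        have := H (j + 1) (Finset.mem_range.mpr (by omega))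
        rw [← div_pow_succ]
        obtain ⟨hb1, hb2⟩ := div_pow_bounds d j v hj' hv hv2
        rwa [edge_mid d t e _ hb1 hb2] at this
      · have := H 0 (Finset.mem_range.mpr (by omega))
        rw [pow_zero, Nat.div_one] at this
        rwa [edge_bot d t e v hv hv2] at this
    · rintro ⟨H, He⟩ j hj
      match j with
      | 0 =>
        rw [pow_zero, Nat.div_one, edge_bot d t e v hv hv2]
        exact He
      | (j + 1) =>
        have hj' : j < d := by have := Finset.mem_range.mp hj; omega
        obtain ⟨hb1, hb2⟩ := div_pow_bounds d j v hj' hv hv2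
        rw [edge_mid d t e _ hb1 hb2, div_pow_succ]
        exact H j (Finset.mem_range.mpr hj')
  calc leafAlive (d + 1) (join _ _ _ (hNsplit d) t e) v
      = decide ((∀ j ∈ Finset.range d, edgeVal d t ((v / 2) / 2 ^ j) = true)
          ∧ e ⟨v - 2 ^ (d + 1), by omega⟩ = true) := by
        rw [leafAlive]; exact decide_eq_decide.mpr hiff
    _ = _ := by
        rw [leafAlive]
        simp

def newbits (d : ℕ) (e b : Fin (2 ^ (d + 1)) → Bool) : Fin (2 ^ d) → Bool :=
  fun u =>
    (e ⟨2 * u, by have := two_pow_succ' d; omega⟩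
        && b ⟨2 * u, by have := two_pow_succ' d; omega⟩)
    || (e ⟨2 * u + 1, by have := two_pow_succ' d; omega⟩
        && b ⟨2 * u + 1, by have := two_pow_succ' d; omega⟩)

set_option maxHeartbeats 1000000 in
lemma alive_split (d : ℕ) (t : Fin (2 ^ (d + 1) - 2) → Bool)
    (e b : Fin (2 ^ (d + 1)) → Bool) :
    aliveW (d + 1) (join _ _ _ (hNsplit d) t e) b = aliveW d t (newbits d e b) := by
  have h2 := two_pow_succ' d
  rw [aliveW, aliveW]
  apply decide_eq_decide.mpr
  constructor
  · rintro ⟨w, hA, hb⟩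
    have hv : 2 ^ (d + 1) ≤ 2 ^ (d + 1) + (w : ℕ) := by omega
    have hv2 : 2 ^ (d + 1) + (w : ℕ) < 2 ^ (d + 1 + 1) := by
      have := two_pow_succ' (d + 1); omega
    rw [leafAlive_split d t e _ hv hv2] at hA
    rw [Bool.and_eq_true] at hA
    obtain ⟨hA1, hA2⟩ := hA
    have hwfin : (⟨2 ^ (d + 1) + (w : ℕ) - 2 ^ (d + 1), by omega⟩ : Fin (2 ^ (d + 1))) = w :=
      Fin.ext (by simp)
    rw [hwfin] at hA2
    refine ⟨⟨(w : ℕ) / 2, by omega⟩, ?_, ?_⟩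
    · have hdiv : (2 ^ (d + 1) + (w : ℕ)) / 2 = 2 ^ d + (w : ℕ) / 2 := by omega
      rw [hdiv] at hA1
      simpa using hA1
    · simp only [newbits]
      rcases Nat.even_or_odd (w : ℕ) with he | ho
      · have hw2 : 2 * ((w : ℕ) / 2) = (w : ℕ) := by
          rcases he with ⟨k, hk⟩; omega
        rw [Bool.or_eq_true]
        left
        have h1 : (⟨2 * ((⟨(w : ℕ) / 2, by omega⟩ : Fin (2 ^ d)) : ℕ), by omega⟩ :
            Fin (2 ^ (d + 1))) = w := Fin.ext (by simp [hw2])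
        simp only [h1]
        rw [Bool.and_eq_true]
        exact ⟨hA2, hb⟩
      · have hw2 : 2 * ((w : ℕ) / 2) + 1 = (w : ℕ) := by
          rcases ho with ⟨k, hk⟩; omega
        rw [Bool.or_eq_true]
        right
        have h1 : (⟨2 * ((⟨(w : ℕ) / 2, by omega⟩ : Fin (2 ^ d)) : ℕ) + 1, by omega⟩ :
            Fin (2 ^ (d + 1))) = w := Fin.ext (by simp [hw2])
        simp only [h1]
        rw [Bool.and_eq_true]
        exact ⟨hA2, hb⟩
  · rintro ⟨u, hA, hnb⟩
    simp only [newbits, Bool.or_eq_true, Bool.and_eq_true] at hnb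
    have hv2' := two_pow_succ' (d + 1)
    rcases hnb with ⟨he, hb⟩ | ⟨he, hb⟩
    · refine ⟨⟨2 * (u : ℕ), by omega⟩, ?_, hb⟩
      have hv : 2 ^ (d + 1) ≤ 2 ^ (d + 1) + 2 * (u : ℕ) := by omega
      have hv2 : 2 ^ (d + 1) + 2 * (u : ℕ) < 2 ^ (d + 1 + 1) := by omega
      rw [leafAlive_split d t e _ hv hv2, Bool.and_eq_true]
      constructor
      · have hdiv : (2 ^ (d + 1) + 2 * (u : ℕ)) / 2 = 2 ^ d + (u : ℕ) := by omega
        rw [hdiv]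
        simpa using hA
      · have h1 : (⟨2 ^ (d + 1) + 2 * (u : ℕ) - 2 ^ (d + 1), by omega⟩ :
            Fin (2 ^ (d + 1))) = ⟨2 * (u : ℕ), by omega⟩ := Fin.ext (by simp)
        rw [h1]
        exact he
    · refine ⟨⟨2 * (u : ℕ) + 1, by omega⟩, ?_, hb⟩
      have hv : 2 ^ (d + 1) ≤ 2 ^ (d + 1) + (2 * (u : ℕ) + 1) := by omega
      have hv2 : 2 ^ (d + 1) + (2 * (u : ℕ) + 1) < 2 ^ (d + 1 + 1) := by omega
      rw [leafAlive_split d t e _ hv hv2, Bool.and_eq_true]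
      constructor
      · have hdiv : (2 ^ (d + 1) + (2 * (u : ℕ) + 1)) / 2 = 2 ^ d + (u : ℕ) := by omega
        rw [hdiv]
        simpa using hA
      · have h1 : (⟨2 ^ (d + 1) + (2 * (u : ℕ) + 1) - 2 ^ (d + 1), by omega⟩ :
            Fin (2 ^ (d + 1))) = ⟨2 * (u : ℕ) + 1, by omega⟩ := Fin.ext (by simp)
        rw [h1]
        exact he

def orpair (d : ℕ) (z : Fin (2 ^ (d + 1)) → Bool) : Fin (2 ^ d) → Bool :=
  fun u =>
    z ⟨2 * u, by have := two_pow_succ' d; omega⟩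
    || z ⟨2 * u + 1, by have := two_pow_succ' d; omega⟩

lemma newbits_eq_orpair (d : ℕ) (e b : Fin (2 ^ (d + 1)) → Bool) :
    newbits d e b = orpair d (fun i => e i && b i) := rfl

lemma orpair_ileave (d : ℕ) (a c : Fin (2 ^ d) → Bool) :
    orpair d (ileave (2 ^ d) (2 ^ (d + 1)) (two_pow_succ' d) a c)
      = fun u => a u || c u := by
  funext u
  simp only [orpair]
  rw [ileave_even (two_pow_succ' d) a c u _ rfl, ileave_odd (two_pow_succ' d) a c u _ rfl]

lemma Pd_succ (p β : ℝ) (d : ℕ) :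
    Pd p (d + 1) β = Pd p d (1 - (1 - p * β) ^ 2) := by
  have hN := hNsplit d
  have hI := two_pow_succ' d
  calc Pd p (d + 1) β
      = ∑ t : Fin (2 ^ (d + 1) - 2) → Bool, ∑ e : Fin (2 ^ (d + 1)) → Bool,
          ∑ b : Fin (2 ^ (d + 1)) → Bool,
          Wc p (join _ _ _ hN t e) *
            (Wc β b * (if aliveW (d + 1) (join _ _ _ hN t e) b then 1 else 0)) := by
        rw [Pd]
        exact sum_join _ _ _ hN (fun x => ∑ b : Fin (2 ^ (d + 1)) → Bool,
          Wc p x * (Wc β b * (if aliveW (d + 1) x b then 1 else 0)))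
    _ = ∑ t : Fin (2 ^ (d + 1) - 2) → Bool, Wc p t *
          ∑ e : Fin (2 ^ (d + 1)) → Bool, ∑ b : Fin (2 ^ (d + 1)) → Bool,
            Wc p e * (Wc β b *
              (if aliveW d t (orpair d (fun i => e i && b i)) then 1 else 0)) := by
        apply Finset.sum_congr rfl
        intro t _
        rw [Finset.mul_sum]
        apply Finset.sum_congr rfl
        intro e _
        rw [Finset.mul_sum]
        apply Finset.sum_congr rfl
        intro b _
        rw [Wc_join, alive_split, newbits_eq_orpair]
        ring
    _ = ∑ t : Fin (2 ^ (d + 1) - 2) → Bool, Wc p t *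
          ∑ z : Fin (2 ^ (d + 1)) → Bool,
            Wc (rr (fun a b => a && b) p β) z *
              (if aliveW d t (orpair d z) then 1 else 0) := by
        apply Finset.sum_congr rfl
        intro t _
        congr 1
        exact pair_subst p β (fun a b => a && b)
          (fun z => if aliveW d t (orpair d z) then 1 else 0)
    _ = ∑ t : Fin (2 ^ (d + 1) - 2) → Bool, Wc p t *
          ∑ a : Fin (2 ^ d) → Bool, ∑ c : Fin (2 ^ d) → Bool,
            Wc (p * β) a * (Wc (p * β) c *
              (if aliveW d t (fun u => a u || c u) then 1 else 0)) := by
        apply Finset.sum_congr rfl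
        intro t _
        congr 1
        rw [rr_and]
        rw [sum_ileave (2 ^ d) (2 ^ (d + 1)) hI
          (fun z => Wc (p * β) z * (if aliveW d t (orpair d z) then 1 else 0))]
        apply Finset.sum_congr rfl
        intro a _
        apply Finset.sum_congr rfl
        intro c _
        rw [Wc_ileave]
        have := orpair_ileave d a c
        rw [show ileave (2 ^ d) (2 ^ (d + 1)) hI a c
            = ileave (2 ^ d) (2 ^ (d + 1)) (two_pow_succ' d) a c from rfl, this]
        ring
    _ = ∑ t : Fin (2 ^ (d + 1) - 2) → Bool, Wc p t *
          ∑ w : Fin (2 ^ d) → Bool,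
            Wc (rr (fun a b => a || b) (p * β) (p * β)) w *
              (if aliveW d t w then 1 else 0) := by
        apply Finset.sum_congr rfl
        intro t _
        congr 1
        exact pair_subst (p * β) (p * β) (fun a b => a || b)
          (fun w => if aliveW d t w then 1 else 0)
    _ = Pd p d (1 - (1 - p * β) ^ 2) := by
        rw [Pd]
        apply Finset.sum_congr rfl
        intro t _
        rw [Finset.mul_sum]
        apply Finset.sum_congr rfl
        intro w _
        rw [rr_or, show (1 : ℝ) - (1 - p * β) * (1 - p * β) = 1 - (1 - p * β) ^ 2 by ring]

lemma Pd_zero (p β : ℝ) : Pd p 0 β = β := by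
  haveI hie : IsEmpty (Fin (2 ^ (0 + 1) - 2)) := by
    rw [show (2 : ℕ) ^ (0 + 1) - 2 = 0 by norm_num]
    infer_instance
  rw [Pd]
  rw [Fintype.sum_unique]
  have hW1 : ∀ y : Fin (2 ^ (0 + 1) - 2) → Bool, Wc p y = 1 := by
    intro y
    rw [Wc, Finset.univ_eq_empty, Finset.prod_empty]
  rw [hW1]
  simp only [one_mul]
  have hbij : Function.Bijective (fun v : Bool => (fun _ => v : Fin (2 ^ 0) → Bool)) := by
    rw [Fintype.bijective_iff_injective_and_card]
    constructor
    · intro v v' hvv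
      exact congrFun hvv ⟨0, by norm_num⟩
    · simp [Fintype.card_fun]
  rw [← Fintype.sum_bijective _ hbij
    (fun v : Bool => Wc β (fun _ => v : Fin (2 ^ 0) → Bool) *
      (if aliveW 0 default (fun _ => v) then 1 else 0))
    _ (fun v => rfl)]
  have hcard : Fintype.card (Fin (2 ^ 0)) = 1 := by simp
  have hWv : ∀ v : Bool, Wc β (fun _ => v : Fin (2 ^ 0) → Bool)
      = if v then β else 1 - β := by
    intro v
    rw [Wc, Finset.prod_const, Finset.card_univ]
    norm_num
  have hAv : ∀ v : Bool, aliveW 0 (default : Fin (2 ^ (0 + 1) - 2) → Bool)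
      (fun _ => v : Fin (2 ^ 0) → Bool) = v := by
    intro v
    cases v
    · simp [aliveW]
    · rw [aliveW]
      simp only [decide_eq_true_eq]
      refine ⟨⟨0, by norm_num⟩, ?_, trivial⟩
      simp [leafAlive]
  rw [Fintype.sum_bool]
  rw [hWv, hWv, hAv, hAv]
  simp

lemma sum_Wc_one {ι : Type*} [Fintype ι] [DecidableEq ι] (φ : (ι → Bool) → ℝ) :
    ∑ b : ι → Bool, Wc 1 b * φ b = φ (fun _ => true) := by
  rw [Finset.sum_eq_single_of_mem (fun _ => true) (Finset.mem_univ _)]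
  · have : Wc (1 : ℝ) (fun _ => true : ι → Bool) = 1 := by
      rw [Wc]
      simp
    rw [this, one_mul]
  · intro b _ hb
    have hex : ∃ i, b i = false := by
      by_contra hcon
      push_neg at hcon
      apply hb
      funext i
      have := hcon i
      cases hbi : b i
      · exact absurd hbi (this)
      · rfl
    obtain ⟨i, hi⟩ := hex
    have : Wc (1 : ℝ) b = 0 := by
      rw [Wc]
      apply Finset.prod_eq_zero (Finset.mem_univ i)
      simp [hi]
    rw [this, zero_mul]

lemma treeConn_eq_aliveW (d : ℕ) (x : Fin (2 ^ (d + 1) - 2) → Bool) :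
    treeConn d x = aliveW d x (fun _ => true) := by
  have h2 := two_pow_succ' d
  rw [treeConn, aliveW]
  apply decide_eq_decide.mpr
  constructor
  · rintro ⟨v, hv, hA⟩
    rw [Finset.mem_Ico] at hv
    refine ⟨⟨v - 2 ^ d, by omega⟩, ?_, rfl⟩
    have : 2 ^ d + ((⟨v - 2 ^ d, by omega⟩ : Fin (2 ^ d)) : ℕ) = v := by simp; omega
    rw [this]
    exact hA
  · rintro ⟨u, hA, -⟩
    exact ⟨2 ^ d + u, Finset.mem_Ico.mpr (by omega), hA⟩

lemma eps_le_g (ε β : ℝ) (hε0 : 0 < ε) (hε1 : ε ≤ 1/2) (hβ1 : ε ≤ β) (hβ2 : β ≤ 1) :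
    ε ≤ 1 - (1 - (1 + ε)/2 * β) ^ 2 ∧ 1 - (1 - (1 + ε)/2 * β) ^ 2 ≤ 1 := by
  constructor
  · nlinarith [mul_nonneg (sub_nonneg.mpr hβ1) (sub_nonneg.mpr hβ2), sq_nonneg (β - ε),
      mul_pos hε0 hε0, sq_nonneg (1 - β), mul_nonneg hε0.le (sub_nonneg.mpr hβ2),
      mul_nonneg (mul_nonneg hε0.le hε0.le) (sub_nonneg.mpr hβ2)]
  · nlinarith [sq_nonneg (1 - (1 + ε)/2 * β)]

lemma Pd_ge (ε : ℝ) (hε0 : 0 < ε) (hε1 : ε ≤ 1/2) :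
    ∀ d β, ε ≤ β → β ≤ 1 → ε ≤ Pd ((1 + ε)/2) d β := by
  intro d
  induction d with
  | zero => intro β h1 _; rwa [Pd_zero]
  | succ d ih =>
    intro β h1 h2
    rw [Pd_succ]
    obtain ⟨hg1, hg2⟩ := eps_le_g ε β hε0 hε1 h1 h2
    exact ih _ hg1 hg2

/-- Fix `ε ∈ (0, 1/2]` and an integer `d ≥ 1`. If each edge of the complete rooted binary
tree of depth `d` is independently set to `1` with probability `(1+ε)/2`, then the
probability that at least one leaf is alive is at least `ε`. -/
theorem stmt10 (ε : ℝ) (hε0 : 0 < ε) (hε1 : ε ≤ 1/2) (d : ℕ) (hd : 1 ≤ d) :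
    ε ≤ ∑ x : Fin (2 ^ (d + 1) - 2) → Bool,
          prodWeight (2 ^ (d + 1) - 2) (fun _ => (1 + ε) / 2) x *
            (if treeConn d x then 1 else 0) := by
  have key := Pd_ge ε hε0 hε1 d 1 (by linarith) le_rfl
  refine le_trans key (le_of_eq ?_)
  rw [Pd]
  apply Finset.sum_congr rfl
  intro x _
  rw [← Finset.mul_sum]
  rw [sum_Wc_one (fun b => if aliveW d x b then 1 else 0)]
  rw [← treeConn_eq_aliveW]
  rfl
end
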